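/- arXiv:1006.5227 — 7 statements merged into one kernel-verified Lean document; each statement's English description precedes it below -/
import Mathlib

section
/- Fix d ≥ 1 and k ≥ 1. Let μ_H be the Haar probability measure on the unitary group U(d), and for a unitary U write U^{⊗k,k} = U^{⊗k} ⊗ (conj U)^{⊗k}, a matrix acting on the 2k-fold tensor power of ℂ^d. Let G_H = ∫ U^{⊗k,k} dμ_H(U), and let μ be any Borel probability measure on U(d) with G_μ = ∫ U^{⊗k,k} dμ(U). Then every vector v with G_H · v = v satisfies G_μ · v = v; equivalently, every eigenvector of G_H with eigenvalue 1 is an eigenvector of G_μ with eigenvalue 1. (Indeed, G_H v = v implies U^{⊗k,k} v = v for every unitary U.) -/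
open Matrix MeasureTheory Kronecker

/-- The `k`-fold tensor power of a `d × d` matrix, as a matrix indexed by tuples. -/
noncomputable def tensorPow (d k : ℕ) (U : Matrix (Fin d) (Fin d) ℂ) :
    Matrix (Fin k → Fin d) (Fin k → Fin d) ℂ :=
  Matrix.of fun x y => ∏ i, U (x i) (y i)

/-- `U^{⊗k,k} = U^{⊗k} ⊗ (conj U)^{⊗k}`. -/
noncomputable def tensorPowKK (d k : ℕ) (U : Matrix (Fin d) (Fin d) ℂ) :
    Matrix ((Fin k → Fin d) × (Fin k → Fin d)) ((Fin k → Fin d) × (Fin k → Fin d)) ℂ :=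
  tensorPow d k U ⊗ₖ tensorPow d k (U.map (starRingEnd ℂ))

lemma tensorPow_mul (d k : ℕ) (U V : Matrix (Fin d) (Fin d) ℂ) :
    tensorPow d k (U * V) = tensorPow d k U * tensorPow d k V := by
  ext x y
  simp only [tensorPow, Matrix.of_apply, Matrix.mul_apply]
  rw [Finset.prod_univ_sum]
  rw [Fintype.piFinset_univ]
  exact Finset.sum_congr rfl fun g _ => Finset.prod_mul_distrib

lemma tensorPowKK_mul (d k : ℕ) (U V : Matrix (Fin d) (Fin d) ℂ) :
    tensorPowKK d k (U * V) = tensorPowKK d k U * tensorPowKK d k V := by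
  unfold tensorPowKK
  rw [Matrix.map_mul, tensorPow_mul, tensorPow_mul, Matrix.mul_kronecker_mul]

lemma unitary_entry_abs_le (d : ℕ) (U : Matrix.unitaryGroup (Fin d) ℂ) (i j : Fin d) :
    ‖(U : Matrix (Fin d) (Fin d) ℂ) i j‖ ≤ 1 := by
  have h1 : star (U : Matrix (Fin d) (Fin d) ℂ) * (U : Matrix (Fin d) (Fin d) ℂ) = 1 := U.2.1
  have h2 : (star (U : Matrix (Fin d) (Fin d) ℂ) * (U : Matrix (Fin d) (Fin d) ℂ)) j j = 1 := by
    rw [h1, Matrix.one_apply_eq]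
  rw [Matrix.mul_apply] at h2
  have h3 : ∀ l : Fin d, (star (U : Matrix (Fin d) (Fin d) ℂ)) j l
      * (U : Matrix (Fin d) (Fin d) ℂ) l j
      = (Complex.normSq ((U : Matrix (Fin d) (Fin d) ℂ) l j) : ℂ) := by
    intro l
    rw [Matrix.star_apply]
    exact Complex.normSq_eq_conj_mul_self.symm
  rw [Finset.sum_congr rfl fun l _ => h3 l] at h2
  rw [← Complex.ofReal_sum] at h2
  have h4 : ∑ l : Fin d, Complex.normSq ((U : Matrix (Fin d) (Fin d) ℂ) l j) = 1 := by
    exact_mod_cast h2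
  have h5 : Complex.normSq ((U : Matrix (Fin d) (Fin d) ℂ) i j) ≤ 1 := by
    rw [← h4]
    exact Finset.single_le_sum
      (f := fun l => Complex.normSq ((U : Matrix (Fin d) (Fin d) ℂ) l j))
      (fun l _ => Complex.normSq_nonneg _) (Finset.mem_univ i)
  have h6 := Complex.sq_norm ((U : Matrix (Fin d) (Fin d) ℂ) i j)
  nlinarith [norm_nonneg ((U : Matrix (Fin d) (Fin d) ℂ) i j)]

lemma tensorPowKK_entry_abs_le (d k : ℕ) (U : Matrix.unitaryGroup (Fin d) ℂ)
    (a b : (Fin k → Fin d) × (Fin k → Fin d)) :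
    ‖tensorPowKK d k (U : Matrix (Fin d) (Fin d) ℂ) a b‖ ≤ 1 := by
  simp only [tensorPowKK, tensorPow, Matrix.kroneckerMap_apply, Matrix.of_apply,
    Matrix.map_apply]
  rw [norm_mul, norm_prod, norm_prod]
  have h1 : ∀ i : Fin k, ‖(U : Matrix (Fin d) (Fin d) ℂ) (a.1 i) (b.1 i)‖ ≤ 1 :=
    fun i => unitary_entry_abs_le d U _ _
  have h2 : ∀ i : Fin k, ‖(starRingEnd ℂ) ((U : Matrix (Fin d) (Fin d) ℂ) (a.2 i) (b.2 i))‖ ≤ 1 := by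
    intro i
    rw [Complex.norm_conj]
    exact unitary_entry_abs_le d U _ _
  calc (∏ i, ‖(U : Matrix (Fin d) (Fin d) ℂ) (a.1 i) (b.1 i)‖)
        * ∏ i, ‖(starRingEnd ℂ) ((U : Matrix (Fin d) (Fin d) ℂ) (a.2 i) (b.2 i))‖
      ≤ 1 * 1 := by
        apply mul_le_mul
        · exact Finset.prod_le_one (fun i _ => norm_nonneg _) (fun i _ => h1 i)
        · exact Finset.prod_le_one (fun i _ => norm_nonneg _) (fun i _ => h2 i)
        · exact Finset.prod_nonneg fun i _ => norm_nonneg _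
        · norm_num
    _ = 1 := by norm_num

lemma tensorPowKK_continuous (d k : ℕ) (a b : (Fin k → Fin d) × (Fin k → Fin d)) :
    Continuous fun U : Matrix.unitaryGroup (Fin d) ℂ =>
      tensorPowKK d k (U : Matrix (Fin d) (Fin d) ℂ) a b := by
  have hentry : ∀ i j : Fin d,
      Continuous fun U : Matrix.unitaryGroup (Fin d) ℂ =>
        (U : Matrix (Fin d) (Fin d) ℂ) i j := fun i j =>
    (continuous_apply j).comp ((continuous_apply i).comp continuous_subtype_val)
  simp only [tensorPowKK, tensorPow, Matrix.kroneckerMap_apply, Matrix.of_apply,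
    Matrix.map_apply]
  apply Continuous.mul
  · exact continuous_finset_prod _ fun i _ => hentry _ _
  · exact continuous_finset_prod _ fun i _ => Complex.continuous_conj.comp (hentry _ _)

lemma tensorPowKK_integrable (d k : ℕ)
    [MeasurableSpace (Matrix.unitaryGroup (Fin d) ℂ)]
    [BorelSpace (Matrix.unitaryGroup (Fin d) ℂ)]
    (ν : Measure (Matrix.unitaryGroup (Fin d) ℂ)) [IsProbabilityMeasure ν]
    (a b : (Fin k → Fin d) × (Fin k → Fin d)) :
    Integrable (fun U : Matrix.unitaryGroup (Fin d) ℂ =>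
      tensorPowKK d k (U : Matrix (Fin d) (Fin d) ℂ) a b) ν := by
  apply Integrable.mono' (integrable_const (1 : ℝ))
  · exact (tensorPowKK_continuous d k a b).aestronglyMeasurable
  · exact Filter.Eventually.of_forall fun U => tensorPowKK_entry_abs_le d k U a b

/-- Every fixed vector of the Haar moment operator `G_H` is a fixed vector of `G_μ`
for any Borel probability measure `μ` on the unitary group. -/
theorem fixed_points_haar_subset_fixed_points (d k : ℕ) (hd : 1 ≤ d) (hk : 1 ≤ k)
    [MeasurableSpace (Matrix.unitaryGroup (Fin d) ℂ)]
    [BorelSpace (Matrix.unitaryGroup (Fin d) ℂ)]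
    (μH μ : Measure (Matrix.unitaryGroup (Fin d) ℂ))
    [μH.IsHaarMeasure] [IsProbabilityMeasure μH] [IsProbabilityMeasure μ]
    (GH Gμ : Matrix ((Fin k → Fin d) × (Fin k → Fin d))
      ((Fin k → Fin d) × (Fin k → Fin d)) ℂ)
    (hGH : ∀ a b, GH a b =
      ∫ U : Matrix.unitaryGroup (Fin d) ℂ,
        tensorPowKK d k (U : Matrix (Fin d) (Fin d) ℂ) a b ∂μH)
    (hGμ : ∀ a b, Gμ a b =
      ∫ U : Matrix.unitaryGroup (Fin d) ℂ,
        tensorPowKK d k (U : Matrix (Fin d) (Fin d) ℂ) a b ∂μ)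
    (v : ((Fin k → Fin d) × (Fin k → Fin d)) → ℂ)
    (hv : GH.mulVec v = v) :
    Gμ.mulVec v = v := by
  -- Step 1: for every unitary U, U^{⊗k,k} * GH = GH (by left invariance of Haar)
  have hinv : ∀ W : Matrix.unitaryGroup (Fin d) ℂ,
      tensorPowKK d k (W : Matrix (Fin d) (Fin d) ℂ) * GH = GH := by
    intro W
    ext a b
    rw [Matrix.mul_apply]
    simp_rw [hGH]
    have hswap : ∑ c, tensorPowKK d k (W : Matrix (Fin d) (Fin d) ℂ) a c *
        (∫ U : Matrix.unitaryGroup (Fin d) ℂ,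
          tensorPowKK d k (U : Matrix (Fin d) (Fin d) ℂ) c b ∂μH)
        = ∫ U : Matrix.unitaryGroup (Fin d) ℂ,
          ∑ c, tensorPowKK d k (W : Matrix (Fin d) (Fin d) ℂ) a c *
            tensorPowKK d k (U : Matrix (Fin d) (Fin d) ℂ) c b ∂μH := by
      rw [integral_finset_sum]
      · exact Finset.sum_congr rfl fun c _ => (integral_const_mul _ _).symm
      · exact fun c _ => (tensorPowKK_integrable d k μH c b).const_mul _
    rw [hswap]
    have hmul : ∀ U : Matrix.unitaryGroup (Fin d) ℂ,
        (∑ c, tensorPowKK d k (W : Matrix (Fin d) (Fin d) ℂ) a c *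
            tensorPowKK d k (U : Matrix (Fin d) (Fin d) ℂ) c b)
          = tensorPowKK d k ((W * U : Matrix.unitaryGroup (Fin d) ℂ) :
              Matrix (Fin d) (Fin d) ℂ) a b := by
      intro U
      rw [show ((W * U : Matrix.unitaryGroup (Fin d) ℂ) : Matrix (Fin d) (Fin d) ℂ)
          = (W : Matrix (Fin d) (Fin d) ℂ) * (U : Matrix (Fin d) (Fin d) ℂ) from rfl]
      rw [tensorPowKK_mul, Matrix.mul_apply]
    simp_rw [hmul]
    exact integral_mul_left_eq_self
      (fun U : Matrix.unitaryGroup (Fin d) ℂ =>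
        tensorPowKK d k (U : Matrix (Fin d) (Fin d) ℂ) a b) W
  -- Step 2: hence U^{⊗k,k} v = v for every unitary U
  have hfix : ∀ U : Matrix.unitaryGroup (Fin d) ℂ,
      (tensorPowKK d k (U : Matrix (Fin d) (Fin d) ℂ)).mulVec v = v := by
    intro U
    calc (tensorPowKK d k (U : Matrix (Fin d) (Fin d) ℂ)).mulVec v
        = (tensorPowKK d k (U : Matrix (Fin d) (Fin d) ℂ)).mulVec (GH.mulVec v) := by rw [hv]
      _ = (tensorPowKK d k (U : Matrix (Fin d) (Fin d) ℂ) * GH).mulVec v := by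
          rw [Matrix.mulVec_mulVec]
      _ = GH.mulVec v := by rw [hinv]
      _ = v := hv
  -- Step 3: integrate
  funext a
  rw [Matrix.mulVec, dotProduct]
  simp_rw [hGμ]
  have hswap : ∑ b, (∫ U : Matrix.unitaryGroup (Fin d) ℂ,
        tensorPowKK d k (U : Matrix (Fin d) (Fin d) ℂ) a b ∂μ) * v b
      = ∫ U : Matrix.unitaryGroup (Fin d) ℂ,
          ∑ b, tensorPowKK d k (U : Matrix (Fin d) (Fin d) ℂ) a b * v b ∂μ := by
    rw [integral_finset_sum]
    · exact Finset.sum_congr rfl fun c _ => (integral_mul_const _ _).symm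
    · exact fun c _ => (tensorPowKK_integrable d k μ a c).mul_const _
  rw [hswap]
  have : ∀ U : Matrix.unitaryGroup (Fin d) ℂ,
      (∑ b, tensorPowKK d k (U : Matrix (Fin d) (Fin d) ℂ) a b * v b) = v a := by
    intro U
    have := congrFun (hfix U) a
    rw [Matrix.mulVec, dotProduct] at this
    exact this
  simp_rw [this]
  simp
end

section
/- Let n ≥ 0 and let Π be a partition of the n-element set Fin n (a Finpartition of the full finset), with the refinement partial order in which Π ≤ Π′ means every block of Π is contained in a block of Π′. Then for every natural number N, N^{|Π|} = Σ_{Π′ ≥ Π} N·(N−1)⋯(N−|Π′|+1), i.e. N raised to the number of blocks of Π equals the sum, over all partitions Π′ coarser than or equal to Π, of the falling factorial (N)_{|Π′|} = N.descFactorial |Π′|. -/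
open Finset

section Aux

open scoped Classical

variable {α β : Type*} [DecidableEq α] [Fintype α]

lemma Finpartition.parts_eq_image_part (R : Finpartition (univ : Finset α)) :
    R.parts = univ.image R.part := by
  ext t
  simp only [mem_image, mem_univ, true_and]
  constructor
  · intro ht
    obtain ⟨x, -, hx⟩ := R.part_surjOn (by exact_mod_cast ht)
    exact ⟨x, hx⟩
  · rintro ⟨x, rfl⟩
    exact R.part_mem.2 (mem_univ x)

lemma Finpartition.eq_of_part_eq {R S : Finpartition (univ : Finset α)}
    (h : ∀ x, R.part x = S.part x) : R = S := by
  ext t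
  rw [show R.parts = S.parts by
    rw [R.parts_eq_image_part, S.parts_eq_image_part]
    exact Finset.image_congr fun x _ => h x]

lemma Finpartition.part_subset_part_of_le {R S : Finpartition (univ : Finset α)}
    (h : R ≤ S) (x : α) : R.part x ⊆ S.part x := by
  obtain ⟨c, hc, hsub⟩ := h (R.part_mem.2 (mem_univ x))
  rwa [S.part_eq_of_mem hc (hsub (R.mem_part (mem_univ x)))]

/-- The partition of `univ` into fibers of `F`. -/
noncomputable def kerPart (F : α → β) : Finpartition (univ : Finset α) :=
  Finpartition.ofSetoid (Setoid.ker F)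

lemma mem_part_kerPart (F : α → β) (x y : α) :
    y ∈ (kerPart F).part x ↔ F x = F y :=
  Finpartition.mem_part_ofSetoid_iff_rel

end Aux

open scoped Classical in
/-- `N^{|Π|} = ∑_{Π' ≥ Π} (N)_{|Π'|}`: the power equals the sum over coarser partitions
of falling factorials. -/
theorem pow_card_eq_sum_descFactorial (n : ℕ)
    (P : Finpartition (Finset.univ : Finset (Fin n))) (N : ℕ) :
    N ^ P.parts.card
      = ∑ P' ∈ Finset.univ.filter
          (fun P' : Finpartition (Finset.univ : Finset (Fin n)) => P ≤ P'),
          N.descFactorial P'.parts.card := by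
  classical
  -- the function on points induced by a function on parts
  set F : ((↥P.parts → Fin N)) → Fin n → Fin N :=
    fun f x => f ⟨P.part x, P.part_mem.2 (mem_univ x)⟩ with hF
  -- the coarser partition induced by `f`
  set Q : ((↥P.parts → Fin N)) → Finpartition (univ : Finset (Fin n)) :=
    fun f => kerPart (F f) with hQ
  have hQle : ∀ f, P ≤ Q f := by
    intro f B hB
    obtain ⟨x, hx⟩ := P.nonempty_of_mem_parts hB
    refine ⟨(Q f).part x, (Q f).part_mem.2 (mem_univ x), fun y hy => ?_⟩
    rw [hQ, mem_part_kerPart, hF]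
    have : P.part y = P.part x := by
      rw [P.part_eq_of_mem hB hy, P.part_eq_of_mem hB hx]
    simp [this]
  -- count functions fiberwise
  have card_fun : N ^ P.parts.card = (univ : Finset (↥P.parts → Fin N)).card := by
    rw [card_univ, Fintype.card_fun, Fintype.card_coe, Fintype.card_fin]
  rw [card_fun,
    Finset.card_eq_sum_card_fiberwise (f := Q)
      (t := Finset.univ.filter fun P' => P ≤ P')
      (fun f _ => mem_filter.2 ⟨mem_univ _, hQle f⟩)]
  refine Finset.sum_congr rfl fun P' hP' => ?_
  have hPP' : P ≤ P' := (mem_filter.1 hP').2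
  -- a representative point of each part of `P'`
  have hrep : ∀ C : ↥P'.parts, ∃ x, x ∈ C.1 := fun C =>
    P'.nonempty_of_mem_parts C.2
  choose rep hrepmem using hrep
  -- a representative point of each part of `P`
  have hrepP : ∀ B : ↥P.parts, ∃ x, x ∈ B.1 := fun B =>
    P.nonempty_of_mem_parts B.2
  choose repP hrepPmem using hrepP
  have keyF : ∀ (h : ↥P'.parts → Fin N) (x : Fin n),
      F (fun B => h ⟨P'.part (repP B), P'.part_mem.2 (mem_univ _)⟩) x
        = h ⟨P'.part x, P'.part_mem.2 (mem_univ x)⟩ := by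
    intro h x
    show h ⟨P'.part (repP ⟨P.part x, P.part_mem.2 (mem_univ x)⟩), _⟩
      = h ⟨P'.part x, P'.part_mem.2 (mem_univ x)⟩
    congr 1
    apply Subtype.ext
    dsimp only
    apply P'.part_eq_of_mem (P'.part_mem.2 (mem_univ x))
    exact Finpartition.part_subset_part_of_le hPP' x
      (hrepPmem ⟨P.part x, P.part_mem.2 (mem_univ x)⟩)
  -- the fiber over `P'` bijects with injective functions `P'.parts → Fin N`
  have hcard : (univ.filter fun f => Q f = P').card
      = (univ.filter fun h : ↥P'.parts → Fin N => Function.Injective h).card := by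
    apply Finset.card_bij'
      (i := fun f _ => fun C : ↥P'.parts => F f (rep C))
      (j := fun h _ => fun B : ↥P.parts =>
        h ⟨P'.part (repP B), P'.part_mem.2 (mem_univ _)⟩)
    · -- i lands in the target
      intro f hf
      have hQf : Q f = P' := (mem_filter.1 hf).2
      refine mem_filter.2 ⟨mem_univ _, fun C1 C2 heq => ?_⟩
      have h2 : rep C2 ∈ (Q f).part (rep C1) := by
        rw [hQ, mem_part_kerPart]; exact heq
      rw [hQf] at h2
      have h1 : P'.part (rep C1) = C1.1 := P'.part_eq_of_mem C1.2 (hrepmem C1)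
      rw [h1] at h2
      exact Subtype.ext (P'.eq_of_mem_parts C1.2 C2.2 h2 (hrepmem C2))
    · -- j lands in the source
      intro h hh
      have hinj : Function.Injective h := (mem_filter.1 hh).2
      refine mem_filter.2 ⟨mem_univ _, ?_⟩
      apply Finpartition.eq_of_part_eq
      intro x
      ext y
      rw [hQ]
      rw [mem_part_kerPart, keyF, keyF]
      constructor
      · intro hxy
        have := hinj hxy
        rw [P'.mem_part_iff_part_eq_part (mem_univ y) (mem_univ x)]
        exact (congrArg Subtype.val this).symm
      · intro hy
        have : P'.part y = P'.part x :=
          (P'.mem_part_iff_part_eq_part (mem_univ y) (mem_univ x)).1 hy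
        congr 1
        exact Subtype.ext this.symm
    · -- left inverse
      intro f hf
      have hQf : Q f = P' := (mem_filter.1 hf).2
      funext B
      show F f (rep ⟨P'.part (repP B), P'.part_mem.2 (mem_univ _)⟩) = f B
      set C : ↥P'.parts := ⟨P'.part (repP B), P'.part_mem.2 (mem_univ _)⟩ with hC
      have hmem : rep C ∈ (Q f).part (repP B) := by
        rw [hQf]; exact hrepmem C
      rw [hQ, mem_part_kerPart] at hmem
      rw [← hmem, hF]
      show f ⟨P.part (repP B), P.part_mem.2 (mem_univ _)⟩ = f B
      congr 1
      exact Subtype.ext (P.part_eq_of_mem B.2 (hrepPmem B))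
    · -- right inverse
      intro h hh
      funext C
      show F (fun B : ↥P.parts =>
        h ⟨P'.part (repP B), P'.part_mem.2 (mem_univ _)⟩) (rep C) = h C
      rw [keyF]
      congr 1
      exact Subtype.ext (P'.part_eq_of_mem C.2 (hrepmem C))
  rw [hcard, ← Fintype.card_subtype]
  rw [Fintype.card_congr (Equiv.subtypeInjectiveEquivEmbedding ↥P'.parts (Fin N))]
  rw [Fintype.card_embedding_eq, Fintype.card_fin, Fintype.card_coe]
end

section
/- Let k ≥ 1 and let Π₁, Π₂ be partitions of the set Fin (2k). Say a tuple m : Fin (2k) → ℤ respects a partition Π if m is constant on every block of Π. Define the bilinear form m·n = Σ_{i < k} m(i)·n(i) − Σ_{k ≤ i < 2k} m(i)·n(i). Then the following are equivalent: (a) m·n = 0 for every m respecting Π₁ and every n respecting Π₂; (b) there exists a permutation π of Fin k such that for every i < k, the indices i and k + π(i) lie in a common block of Π₁, and i and k + π(i) lie in a common block of Π₂ (i.e. Π₁ ≥ P(π) and Π₂ ≥ P(π), where P(π) is the perfect-matching partition {{i, k+π(i)} : i < k}). -/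
/-- The embedding of `i < k` as the index `i` of `Fin (2k)`. -/
def firstHalf (k : ℕ) (i : Fin k) : Fin (2 * k) :=
  ⟨i.val, by have := i.isLt; omega⟩

/-- The embedding of `i < k` as the index `k + i` of `Fin (2k)`. -/
def secondHalf (k : ℕ) (i : Fin k) : Fin (2 * k) :=
  ⟨k + i.val, by have := i.isLt; omega⟩

/-- A tuple `m` respects a partition `P` if it is constant on every block of `P`. -/
def RespectsPartition (k : ℕ) (P : Finpartition (Finset.univ : Finset (Fin (2 * k))))
    (m : Fin (2 * k) → ℤ) : Prop :=
  ∀ b ∈ P.parts, ∀ i ∈ b, ∀ j ∈ b, m i = m j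

/-- The signed bilinear form `m·n = ∑_{i<k} mᵢnᵢ − ∑_{k≤i<2k} mᵢnᵢ`. -/
def signedDot (k : ℕ) (m n : Fin (2 * k) → ℤ) : ℤ :=
  ∑ i : Fin (2 * k), if (i : ℕ) < k then m i * n i else -(m i * n i)

open Finset

/-- If two functions have fibers of equal cardinality, there is an equiv intertwining them. -/
lemma exists_equiv_of_card_fiber_eq {α β γ : Type*} [Fintype α] [Fintype β] [DecidableEq γ]
    (f : α → γ) (g : β → γ)
    (h : ∀ c, Fintype.card {a // f a = c} = Fintype.card {b // g b = c}) :
    ∃ e : α ≃ β, ∀ a, g (e a) = f a := by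
  classical
  refine ⟨(Equiv.sigmaFiberEquiv f).symm.trans
    ((Equiv.sigmaCongrRight fun c => Fintype.equivOfCardEq (h c)).trans
      (Equiv.sigmaFiberEquiv g)), fun a => ?_⟩
  exact ((Fintype.equivOfCardEq (h (f a))) ⟨a, rfl⟩).2

lemma signedDot_split (k : ℕ) (m n : Fin (2 * k) → ℤ) :
    signedDot k m n = (∑ i : Fin k, m (firstHalf k i) * n (firstHalf k i))
      - ∑ i : Fin k, m (secondHalf k i) * n (secondHalf k i) := by
  have h := Fintype.sum_equiv ((finCongr (two_mul k)).symm)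
    (fun j : Fin (k + k) =>
      if (((finCongr (two_mul k)).symm j : Fin (2 * k)) : ℕ) < k
        then m ((finCongr (two_mul k)).symm j) * n ((finCongr (two_mul k)).symm j)
        else -(m ((finCongr (two_mul k)).symm j) * n ((finCongr (two_mul k)).symm j)))
    (fun i : Fin (2 * k) => if (i : ℕ) < k then m i * n i else -(m i * n i))
    (fun j => rfl)
  rw [signedDot, ← h, Fin.sum_univ_add]
  have h1 : ∀ i : Fin k, ((finCongr (two_mul k)).symm (Fin.castAdd k i)) = firstHalf k i :=
    fun i => rfl
  have h2 : ∀ i : Fin k, ((finCongr (two_mul k)).symm (Fin.natAdd k i)) = secondHalf k i :=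
    fun i => rfl
  have e1 : ∀ i : Fin k,
      (if (((finCongr (two_mul k)).symm (Fin.castAdd k i) : Fin (2 * k)) : ℕ) < k
        then m ((finCongr (two_mul k)).symm (Fin.castAdd k i)) *
          n ((finCongr (two_mul k)).symm (Fin.castAdd k i))
        else -(m ((finCongr (two_mul k)).symm (Fin.castAdd k i)) *
          n ((finCongr (two_mul k)).symm (Fin.castAdd k i))))
      = m (firstHalf k i) * n (firstHalf k i) := by
    intro i
    rw [h1]
    exact if_pos i.isLt
  have e2 : ∀ i : Fin k,
      (if (((finCongr (two_mul k)).symm (Fin.natAdd k i) : Fin (2 * k)) : ℕ) < k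
        then m ((finCongr (two_mul k)).symm (Fin.natAdd k i)) *
          n ((finCongr (two_mul k)).symm (Fin.natAdd k i))
        else -(m ((finCongr (two_mul k)).symm (Fin.natAdd k i)) *
          n ((finCongr (two_mul k)).symm (Fin.natAdd k i))))
      = -(m (secondHalf k i) * n (secondHalf k i)) := by
    intro i
    rw [h2]
    exact if_neg (by simp [secondHalf])
  rw [Finset.sum_congr rfl (fun i _ => e1 i), Finset.sum_congr rfl (fun i _ => e2 i),
    Finset.sum_neg_distrib, sub_eq_add_neg]

/-- `m·n = 0` for all `m` respecting `Π₁` and `n` respecting `Π₂` iff there is a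
permutation `π` of `Fin k` with `Π₁, Π₂ ≥ P(π)`, i.e. `i` and `k + π(i)` share a
block in both partitions. -/
theorem signedDot_eq_zero_iff_perm (k : ℕ) (hk : 1 ≤ k)
    (P₁ P₂ : Finpartition (Finset.univ : Finset (Fin (2 * k)))) :
    (∀ m n : Fin (2 * k) → ℤ,
        RespectsPartition k P₁ m → RespectsPartition k P₂ n → signedDot k m n = 0)
      ↔ ∃ π : Equiv.Perm (Fin k),
          (∀ i : Fin k, ∃ b ∈ P₁.parts, firstHalf k i ∈ b ∧ secondHalf k (π i) ∈ b) ∧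
          (∀ i : Fin k, ∃ b ∈ P₂.parts, firstHalf k i ∈ b ∧ secondHalf k (π i) ∈ b) := by
  classical
  constructor
  · intro H
    set key : Fin (2 * k) → Finset (Fin (2 * k)) × Finset (Fin (2 * k)) :=
      fun x => (P₁.part x, P₂.part x) with hkey
    have hcount : ∀ v, Fintype.card {i : Fin k // key (firstHalf k i) = v}
        = Fintype.card {i : Fin k // key (secondHalf k i) = v} := by
      intro v
      by_cases hv : v.1 ∈ P₁.parts ∧ v.2 ∈ P₂.parts
      · obtain ⟨hb, hc⟩ := hv
        have hm : RespectsPartition k P₁ (fun x => if x ∈ v.1 then 1 else 0) := by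
          intro b' hb' i hi j hj
          by_cases hbb : b' = v.1
          · subst hbb; simp [hi, hj]
          · have hi' : i ∉ v.1 := fun h => hbb (P₁.eq_of_mem_parts hb' hb hi h)
            have hj' : j ∉ v.1 := fun h => hbb (P₁.eq_of_mem_parts hb' hb hj h)
            simp [hi', hj']
        have hn : RespectsPartition k P₂ (fun x => if x ∈ v.2 then 1 else 0) := by
          intro b' hb' i hi j hj
          by_cases hbb : b' = v.2
          · subst hbb; simp [hi, hj]
          · have hi' : i ∉ v.2 := fun h => hbb (P₂.eq_of_mem_parts hb' hc hi h)
            have hj' : j ∉ v.2 := fun h => hbb (P₂.eq_of_mem_parts hb' hc hj h)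
            simp [hi', hj']
        have h0 := H _ _ hm hn
        rw [signedDot_split] at h0
        have hterm : ∀ x : Fin (2 * k),
            (if x ∈ v.1 then (1 : ℤ) else 0) * (if x ∈ v.2 then (1 : ℤ) else 0)
              = if key x = v then 1 else 0 := by
          intro x
          have h1 : x ∈ v.1 ↔ P₁.part x = v.1 :=
            ⟨fun h => P₁.part_eq_of_mem hb h, fun h => h ▸ P₁.mem_part (mem_univ x)⟩
          have h2 : x ∈ v.2 ↔ P₂.part x = v.2 :=
            ⟨fun h => P₂.part_eq_of_mem hc h, fun h => h ▸ P₂.mem_part (mem_univ x)⟩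
          have hkx : key x = v ↔ (x ∈ v.1 ∧ x ∈ v.2) := by
            rw [hkey, Prod.ext_iff, ← h1, ← h2]
          by_cases hx1 : x ∈ v.1 <;> by_cases hx2 : x ∈ v.2 <;>
            simp [hx1, hx2, hkx]
        simp only [hterm] at h0
        rw [Finset.sum_boole, Finset.sum_boole, sub_eq_zero, Nat.cast_inj] at h0
        rw [Fintype.card_subtype, Fintype.card_subtype]
        exact h0
      · have e1 : IsEmpty {i : Fin k // key (firstHalf k i) = v} := by
          constructor; rintro ⟨i, hi⟩
          exact hv ⟨hi ▸ P₁.part_mem.2 (mem_univ _), hi ▸ P₂.part_mem.2 (mem_univ _)⟩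
        have e2 : IsEmpty {i : Fin k // key (secondHalf k i) = v} := by
          constructor; rintro ⟨i, hi⟩
          exact hv ⟨hi ▸ P₁.part_mem.2 (mem_univ _), hi ▸ P₂.part_mem.2 (mem_univ _)⟩
        rw [Fintype.card_eq_zero, Fintype.card_eq_zero]
    obtain ⟨e, he⟩ := exists_equiv_of_card_fiber_eq _ _ hcount
    refine ⟨e, fun i => ?_, fun i => ?_⟩
    · refine ⟨P₁.part (firstHalf k i), P₁.part_mem.2 (mem_univ _), P₁.mem_part (mem_univ _), ?_⟩
      have h1 : P₁.part (secondHalf k (e i)) = P₁.part (firstHalf k i) :=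
        congrArg Prod.fst (he i)
      exact h1 ▸ P₁.mem_part (mem_univ _)
    · refine ⟨P₂.part (firstHalf k i), P₂.part_mem.2 (mem_univ _), P₂.mem_part (mem_univ _), ?_⟩
      have h2 : P₂.part (secondHalf k (e i)) = P₂.part (firstHalf k i) :=
        congrArg Prod.snd (he i)
      exact h2 ▸ P₂.mem_part (mem_univ _)
  · rintro ⟨π, h1, h2⟩ m n hm hn
    rw [signedDot_split]
    have key : ∀ i : Fin k, m (secondHalf k (π i)) * n (secondHalf k (π i))
        = m (firstHalf k i) * n (firstHalf k i) := by
      intro i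
      obtain ⟨b, hb, hb1, hb2⟩ := h1 i
      obtain ⟨c, hc, hc1, hc2⟩ := h2 i
      rw [hm b hb _ hb2 _ hb1, hn c hc _ hc2 _ hc1]
    rw [show (∑ i : Fin k, m (secondHalf k i) * n (secondHalf k i))
        = ∑ i : Fin k, m (secondHalf k (π i)) * n (secondHalf k (π i)) from
      (Equiv.sum_comp π (fun j => m (secondHalf k j) * n (secondHalf k j))).symm]
    simp only [key]
    exact sub_self _
end

section
/- Fix an integer n ≥ 2 and define the Markov transition matrix P on the state space {1, 2, …, n} by: P(x, x−1) = 2x(x−1)/(5n(n−1)) for 2 ≤ x ≤ n, P(x, x+1) = 6x(n−x)/(5n(n−1)) for 1 ≤ x ≤ n−1, P(x, x) = 1 − 2x(3n−2x−1)/(5n(n−1)) for 1 ≤ x ≤ n, and P(x, y) = 0 whenever |x − y| ≥ 2. Then the probability vector π₀(x) = 3^x · C(n, x) / (4^n − 1) is a stationary distribution of P: π₀ sums to 1 over x ∈ {1, …, n}, and Σ_{x=1}^n π₀(x) · P(x, y) = π₀(y) for every y ∈ {1, …, n}. -/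
/-- The distribution `π₀(x) = 3^x C(n,x)/(4^n − 1)` is stationary for the zero-chain
transition matrix `P` on `{1, …, n}`. -/
theorem zero_chain_stationary (n : ℕ) (hn : 2 ≤ n) (P : ℕ → ℕ → ℝ) (π₀ : ℕ → ℝ)
    (hdown : ∀ x, 2 ≤ x → x ≤ n →
      P x (x - 1) = (2 * x * (x - 1) : ℝ) / (5 * n * (n - 1)))
    (hup : ∀ x, 1 ≤ x → x ≤ n - 1 →
      P x (x + 1) = (6 * x * (n - x) : ℝ) / (5 * n * (n - 1)))
    (hdiag : ∀ x, 1 ≤ x → x ≤ n →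
      P x x = 1 - (2 * x * (3 * n - 2 * x - 1) : ℝ) / (5 * n * (n - 1)))
    (hzero : ∀ x y, 1 ≤ x → x ≤ n → 1 ≤ y → y ≤ n →
      (x + 2 ≤ y ∨ y + 2 ≤ x) → P x y = 0)
    (hpi : ∀ x, π₀ x = 3 ^ x * (n.choose x : ℝ) / (4 ^ n - 1)) :
    (∑ x ∈ Finset.Icc 1 n, π₀ x = 1) ∧
    ∀ y ∈ Finset.Icc 1 n, ∑ x ∈ Finset.Icc 1 n, π₀ x * P x y = π₀ y := by
  have h4 : (4:ℝ) ^ n - 1 ≠ 0 := by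
    have : (1:ℝ) < 4 ^ n := by
      have := one_lt_pow₀ (a := (4:ℝ)) (by norm_num) (by omega : n ≠ 0)
      linarith
    linarith
  have hnR : (2:ℝ) ≤ (n:ℝ) := by exact_mod_cast hn
  have hD : (5 * (n:ℝ) * ((n:ℝ) - 1)) ≠ 0 := by
    have : (0:ℝ) < 5 * (n:ℝ) * ((n:ℝ) - 1) := by nlinarith
    linarith
  constructor
  · have hbin : ∑ k ∈ Finset.range (n+1), (3:ℝ)^k * (n.choose k : ℝ) = 4 ^ n := by
      have h := add_pow (3:ℝ) 1 n
      simp only [one_pow, mul_one] at h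
      norm_num at h
      rw [← h]
    have hset : Finset.range (n+1) = insert 0 (Finset.Icc 1 n) := by
      ext x; simp [Finset.mem_Icc]; omega
    rw [hset, Finset.sum_insert (by simp)] at hbin
    norm_num at hbin
    simp only [hpi]
    rw [← Finset.sum_div]
    rw [show ∑ x ∈ Finset.Icc 1 n, (3:ℝ)^x * (n.choose x : ℝ) = 4^n - 1 by linarith]
    exact div_self h4
  · intro y hy
    simp only [Finset.mem_Icc] at hy
    obtain ⟨hy1, hy2⟩ := hy
    have key : ∑ x ∈ Finset.Icc 1 n, π₀ x * P x y
        = ∑ x ∈ Finset.Icc (max 1 (y-1)) (min n (y+1)), π₀ x * P x y := by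
      refine (Finset.sum_subset ?_ ?_).symm
      · intro x hx; simp only [Finset.mem_Icc] at *; omega
      · intro x hx hx'
        simp only [Finset.mem_Icc] at hx hx'
        rw [hzero x y hx.1 hx.2 hy1 hy2 (by omega), mul_zero]
    rw [key]
    have hrel : ∀ k, k ≤ n → (n.choose k : ℝ) * ((n:ℝ) - k) = (n.choose (k+1) : ℝ) * (k+1) := by
      intro k hk
      have h := Nat.choose_succ_right_eq n k
      have h' : ((n.choose (k+1)) * (k+1) : ℝ) = (n.choose k : ℝ) * ((n - k : ℕ) : ℝ) := by
        exact_mod_cast congrArg (fun m : ℕ => (m:ℝ)) h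
      rw [Nat.cast_sub hk] at h'
      push_cast at h' ⊢
      linarith
    obtain ⟨z, rfl⟩ : ∃ z, y = z + 1 := ⟨y - 1, by omega⟩
    rcases Nat.lt_or_ge (z+1) n with hlt | hge
    · rcases Nat.eq_zero_or_pos z with rfl | hz
      · -- y = 1
        have hset : Finset.Icc (max 1 (0+1-1)) (min n (0+1+1)) = {1, 2} := by
          ext x; simp [Finset.mem_Icc]; omega
        rw [hset, Finset.sum_insert (by norm_num), Finset.sum_singleton]
        rw [hdiag 1 le_rfl (by omega), hdown 2 le_rfl (by omega)]
        simp only [hpi, Nat.choose_one_right]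
        have r1 := hrel 1 (by omega)
        simp only [Nat.choose_one_right] at r1
        have hc2 : ((n.choose 2 : ℕ) : ℝ) = (n:ℝ) * ((n:ℝ) - 1) / 2 := by
          push_cast at r1 ⊢; linarith
        rw [hc2]
        push_cast
        field_simp
        simp only [zero_add, Nat.choose_one_right]
        ring
      · -- interior: 1 ≤ z, z + 2 ≤ n
        have hset : Finset.Icc (max 1 (z+1-1)) (min n (z+1+1)) = {z, z+1, z+2} := by
          ext x; simp [Finset.mem_Icc]; omega
        rw [hset, Finset.sum_insert (by simp), Finset.sum_insert (by simp),
          Finset.sum_singleton]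
        rw [hup z hz (by omega), hdiag (z+1) (by omega) (by omega),
          show P (z+2) (z+1) = P (z+2) (z+2-1) from rfl, hdown (z+2) (by omega) (by omega)]
        simp only [hpi]
        have hnz : (n:ℝ) - (z:ℝ) ≠ 0 := by
          have : (z:ℝ) + 1 < (n:ℝ) := by exact_mod_cast hlt
          linarith
        have ha : (n.choose z : ℝ) = (n.choose (z+1) : ℝ) * ((z:ℝ)+1) / ((n:ℝ) - z) := by
          have := hrel z (by omega)
          field_simp
          linarith
        have hc : (n.choose (z+1+1) : ℝ) = (n.choose (z+1) : ℝ) * ((n:ℝ) - ((z:ℝ)+1)) / ((z:ℝ)+1+1) := by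
          have := hrel (z+1) (by omega)
          push_cast at this ⊢
          field_simp
          linarith
        rw [ha, hc]
        push_cast
        field_simp
        ring
    · -- y = n
      have hyn : z + 1 = n := by omega
      subst hyn
      have hset : Finset.Icc (max 1 (z+1-1)) (min (z+1) (z+1+1)) = {z, z+1} := by
        ext x; simp [Finset.mem_Icc]; omega
      rw [hset, Finset.sum_insert (by simp), Finset.sum_singleton]
      rw [hup z (by omega) (by omega), hdiag (z+1) (by omega) le_rfl]
      simp only [hpi, Nat.choose_succ_self_right, Nat.choose_self]
      have hzR : (0:ℝ) < (z:ℝ) := by exact_mod_cast (by omega : 0 < z)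
      push_cast
      field_simp [hzR.ne']
      ring
end

section
/- Consider, for each integer n ≥ 2, the zero-chain transition matrix P on {1, …, n} defined by P(x, x−1) = 2x(x−1)/(5n(n−1)), P(x, x+1) = 6x(n−x)/(5n(n−1)), P(x, x) = 1 − 2x(3n−2x−1)/(5n(n−1)), and P(x, y) = 0 for |x−y| ≥ 2, with stationary distribution π₀(x) = 3^x·C(n,x)/(4^n − 1). Then the chain mixes in time O(n log(n/ε)): there exists a universal constant C > 0 such that for every n ≥ 2, every 0 < ε < 1, every probability vector v on {1, …, n}, and every natural number t with t ≥ C · n · log(n/ε), one has (1/2) · Σ_{y=1}^n | (vᵀPᵗ)(y) − π₀(y) | ≤ ε. -/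
/-- The zero-chain transition matrix on `{1, …, n}` (the state of index `i : Fin n`
is `x = i + 1`). -/
noncomputable def zeroChainP (n : ℕ) : Matrix (Fin n) (Fin n) ℝ :=
  Matrix.of fun i j =>
    if (j : ℕ) + 1 = (i : ℕ) then
      (2 * ((i : ℕ) + 1) * (i : ℕ) : ℝ) / (5 * n * (n - 1))
    else if (j : ℕ) = (i : ℕ) + 1 then
      (6 * ((i : ℕ) + 1) * (n - ((i : ℕ) + 1)) : ℝ) / (5 * n * (n - 1))
    else if j = i then
      1 - (2 * ((i : ℕ) + 1) * (3 * n - 2 * ((i : ℕ) + 1) - 1) : ℝ) / (5 * n * (n - 1))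
    else 0

/-- The stationary distribution `π₀(x) = 3^x C(n,x)/(4^n − 1)` of the zero chain. -/
noncomputable def zeroChainPi (n : ℕ) : Fin n → ℝ :=
  fun i => 3 ^ ((i : ℕ) + 1) * (n.choose ((i : ℕ) + 1) : ℝ) / (4 ^ n - 1)

namespace ZChainAux

/-- denominator -/
noncomputable def DD (n : ℕ) : ℝ := 5 * n * ((n : ℝ) - 1)

/-- down coefficient of row `i` (state `x = i+1`) -/
noncomputable def dc (n i : ℕ) : ℝ := 2 * ((i : ℝ) + 1) * i / DD n
/-- up coefficient of row `i` -/
noncomputable def uc (n i : ℕ) : ℝ := 6 * ((i : ℝ) + 1) * ((n : ℝ) - ((i : ℝ) + 1)) / DD n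
/-- diagonal coefficient of row `i` -/
noncomputable def mc (n i : ℕ) : ℝ :=
  1 - 2 * ((i : ℝ) + 1) * (3 * (n : ℝ) - 2 * ((i : ℝ) + 1) - 1) / DD n

/-- extension by zero -/
noncomputable def ext {n : ℕ} (φ : Fin n → ℝ) : ℕ → ℝ :=
  fun m => if h : m < n then φ ⟨m, h⟩ else 0

/-- edge weights -/
noncomputable def wt (e : ℕ) : ℝ := 1 / (((e : ℝ) + 1) * ((e : ℝ) + 2))

/-- contraction factor -/
noncomputable def lam (n : ℕ) : ℝ := 1 - 2 * ((n : ℝ) + 1) / DD n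

variable {n : ℕ}

lemma DD_pos (hn : 2 ≤ n) : 0 < DD n := by
  have : (2 : ℝ) ≤ (n : ℝ) := by exact_mod_cast hn
  unfold DD; nlinarith

lemma mc_eq (i : ℕ) : mc n i = 1 - dc n i - uc n i := by
  unfold mc dc uc
  have h : 2 * ((i : ℝ) + 1) * (3 * (n : ℝ) - 2 * ((i : ℝ) + 1) - 1) =
      2 * ((i : ℝ) + 1) * i + 6 * ((i : ℝ) + 1) * ((n : ℝ) - ((i : ℝ) + 1)) := by ring
  rw [h, add_div]
  ring

lemma dc_nonneg (i : ℕ) (hn : 2 ≤ n) : 0 ≤ dc n i := by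
  have h := DD_pos (n := n) hn
  unfold dc; positivity

lemma uc_nonneg (i : ℕ) (hn : 2 ≤ n) (hi : i < n) : 0 ≤ uc n i := by
  have h := DD_pos (n := n) hn
  have : ((i : ℝ) + 1) ≤ (n : ℝ) := by exact_mod_cast hi
  unfold uc
  apply div_nonneg _ (le_of_lt h)
  nlinarith [Nat.cast_nonneg (α := ℝ) i]

lemma wt_pos (e : ℕ) : 0 < wt e := by
  unfold wt; positivity

lemma entry (i j : Fin n) : zeroChainP n i j =
    if (j : ℕ) + 1 = (i : ℕ) then dc n i
    else if (j : ℕ) = (i : ℕ) + 1 then uc n i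
    else if (j : ℕ) = (i : ℕ) then mc n i
    else 0 := by
  unfold zeroChainP dc uc mc DD
  simp only [Matrix.of_apply, Fin.ext_iff]

/-- sum over `Fin n` of an indicator supported at coercion value `k` -/
lemma sum_ite_coe (k : ℕ) (g : Fin n → ℝ) :
    ∑ j : Fin n, (if (j : ℕ) = k then g j else 0) =
      if h : k < n then g ⟨k, h⟩ else 0 := by
  split
  · next h =>
    rw [Finset.sum_congr rfl (g := fun j => if j = (⟨k, h⟩ : Fin n) then g j else 0)
      (fun j _ => by simp [Fin.ext_iff])]
    simp [Finset.sum_ite_eq']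
  · next h =>
    apply Finset.sum_eq_zero
    intro j _
    rw [if_neg]
    intro hj
    exact h (hj ▸ j.isLt)

/-- row formula for `mulVec` -/
lemma mulVec_apply (φ : Fin n → ℝ) (i : Fin n) :
    (zeroChainP n).mulVec φ i =
      dc n i * ext φ ((i : ℕ) - 1) + mc n i * ext φ i + uc n i * ext φ ((i : ℕ) + 1) := by
  have hsplit : ∀ j : Fin n, zeroChainP n i j * φ j =
      (if (j : ℕ) = (i : ℕ) - 1 ∧ 1 ≤ (i : ℕ) then dc n i * φ j else 0) +
      ((if (j : ℕ) = (i : ℕ) + 1 then uc n i * φ j else 0) +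
      (if (j : ℕ) = (i : ℕ) then mc n i * φ j else 0)) := by
    intro j
    rw [entry]
    split_ifs <;> first | omega | ring
  have hmv : (zeroChainP n).mulVec φ i = ∑ j : Fin n, zeroChainP n i j * φ j := by
    simp [Matrix.mulVec, dotProduct]
  rw [hmv, Finset.sum_congr rfl (fun j _ => hsplit j), Finset.sum_add_distrib,
    Finset.sum_add_distrib]
  have h3 : (∑ j : Fin n, if (j : ℕ) = (i : ℕ) then mc n i * φ j else 0)
      = mc n i * ext φ (i : ℕ) := by
    rw [sum_ite_coe]
    rw [dif_pos i.isLt]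
    unfold ext
    rw [dif_pos i.isLt]
  have h2 : (∑ j : Fin n, if (j : ℕ) = (i : ℕ) + 1 then uc n i * φ j else 0)
      = uc n i * ext φ ((i : ℕ) + 1) := by
    rw [sum_ite_coe]
    unfold ext
    split
    · rfl
    · rw [mul_zero]
  have h1 : (∑ j : Fin n, if (j : ℕ) = (i : ℕ) - 1 ∧ 1 ≤ (i : ℕ) then dc n i * φ j else 0)
      = dc n i * ext φ ((i : ℕ) - 1) := by
    by_cases hi : 1 ≤ (i : ℕ)
    · have hcond : ∀ j : Fin n, ((j : ℕ) = (i : ℕ) - 1 ∧ 1 ≤ (i : ℕ)) ↔ ((j : ℕ) = (i : ℕ) - 1) := by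
        intro j; simp [hi]
      rw [Finset.sum_congr rfl (fun j _ => by rw [if_congr (hcond j) rfl rfl]), sum_ite_coe]
      have hlt : (i : ℕ) - 1 < n := lt_of_le_of_lt (Nat.sub_le _ _) i.isLt
      rw [dif_pos hlt]
      unfold ext
      rw [dif_pos hlt]
    · have hi0 : (i : ℕ) = 0 := by omega
      have : (∑ j : Fin n, if (j : ℕ) = (i : ℕ) - 1 ∧ 1 ≤ (i : ℕ) then dc n i * φ j else 0)
          = 0 := by
        apply Finset.sum_eq_zero; intro j _; rw [if_neg]; omega
      rw [this]
      unfold dc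
      rw [hi0]
      norm_num
  rw [h1, h2, h3]
  ring

/-- column formula for `vecMul` -/
lemma vecMul_apply (ψ : Fin n → ℝ) (j : Fin n) :
    Matrix.vecMul ψ (zeroChainP n) j =
      ext ψ ((j : ℕ) + 1) * dc n ((j : ℕ) + 1) + ψ j * mc n j +
        (if (j : ℕ) = 0 then 0 else ext ψ ((j : ℕ) - 1) * uc n ((j : ℕ) - 1)) := by
  have hsplit : ∀ i : Fin n, ψ i * zeroChainP n i j =
      (if (i : ℕ) = (j : ℕ) + 1 then ψ i * dc n i else 0) +
      ((if (i : ℕ) = (j : ℕ) - 1 ∧ 1 ≤ (j : ℕ) then ψ i * uc n i else 0) +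
      (if (i : ℕ) = (j : ℕ) then ψ i * mc n i else 0)) := by
    intro i
    rw [entry]
    split_ifs <;> first | omega | ring
  have hmv : Matrix.vecMul ψ (zeroChainP n) j = ∑ i : Fin n, ψ i * zeroChainP n i j := by
    simp [Matrix.vecMul, dotProduct]
  rw [hmv, Finset.sum_congr rfl (fun i _ => hsplit i), Finset.sum_add_distrib,
    Finset.sum_add_distrib]
  have h1 : (∑ i : Fin n, if (i : ℕ) = (j : ℕ) + 1 then ψ i * dc n i else 0)
      = ext ψ ((j : ℕ) + 1) * dc n ((j : ℕ) + 1) := by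
    rw [sum_ite_coe (g := fun i => ψ i * dc n i)]
    unfold ext
    split
    · rfl
    · rw [zero_mul]
  have h3 : (∑ i : Fin n, if (i : ℕ) = (j : ℕ) then ψ i * mc n i else 0)
      = ψ j * mc n j := by
    rw [sum_ite_coe (g := fun i => ψ i * mc n i), dif_pos j.isLt]
  have h2 : (∑ i : Fin n, if (i : ℕ) = (j : ℕ) - 1 ∧ 1 ≤ (j : ℕ) then ψ i * uc n i else 0)
      = (if (j : ℕ) = 0 then 0 else ext ψ ((j : ℕ) - 1) * uc n ((j : ℕ) - 1)) := by
    by_cases hj : (j : ℕ) = 0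
    · rw [if_pos hj]
      apply Finset.sum_eq_zero; intro i _; rw [if_neg]; omega
    · rw [if_neg hj]
      have hj1 : 1 ≤ (j : ℕ) := by omega
      have hcond : ∀ i : Fin n, ((i : ℕ) = (j : ℕ) - 1 ∧ 1 ≤ (j : ℕ)) ↔ ((i : ℕ) = (j : ℕ) - 1) := by
        intro i; simp [hj1]
      rw [Finset.sum_congr rfl (fun i _ => by rw [if_congr (hcond i) rfl rfl]),
        sum_ite_coe (g := fun i => ψ i * uc n i)]
      have hlt : (j : ℕ) - 1 < n := lt_of_le_of_lt (Nat.sub_le _ _) j.isLt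
      rw [dif_pos hlt]
      unfold ext
      rw [dif_pos hlt]
  rw [h1, h2, h3]
  ring

lemma ext_coe (φ : Fin n → ℝ) (i : Fin n) : ext φ (i : ℕ) = φ i := by
  unfold ext
  rw [dif_pos i.isLt]

lemma ext_mk (φ : Fin n → ℝ) (k : ℕ) (hk : k < n) : ext φ k = φ ⟨k, hk⟩ := by
  unfold ext
  rw [dif_pos hk]

lemma db (hn : 2 ≤ n) (k : ℕ) (hk : k + 1 < n) :
    ext (zeroChainPi n) k * uc n k = ext (zeroChainPi n) (k + 1) * dc n (k + 1) := by
  rw [ext_mk _ k (by omega), ext_mk _ (k+1) hk]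
  have hle : k + 1 ≤ n := by omega
  have hch : ((n.choose (k+2)) : ℝ) * ((k:ℝ)+2) = (n.choose (k+1) : ℝ) * ((n:ℝ) - ((k:ℝ)+1)) := by
    have h := Nat.choose_succ_right_eq n (k+1)
    have h2 := congrArg (Nat.cast : ℕ → ℝ) h
    push_cast [Nat.cast_sub hle] at h2
    linarith
  unfold zeroChainPi uc dc DD
  rw [div_mul_div_comm, div_mul_div_comm]
  congr 1
  push_cast
  linear_combination (-(3:ℝ)^(k+1) * 6 * ((k:ℝ)+1)) * hch

lemma sum_pi (hn : 2 ≤ n) : ∑ i : Fin n, zeroChainPi n i = 1 := by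
  have h1 : (1:ℝ) < 4 ^ n := by
    apply one_lt_pow₀ (by norm_num) (by omega)
  have h4 : (4:ℝ) ^ n - 1 ≠ 0 := sub_ne_zero.mpr (ne_of_gt h1)
  unfold zeroChainPi
  rw [← Finset.sum_div, div_eq_one_iff_eq h4]
  rw [Fin.sum_univ_eq_sum_range (fun k => (3:ℝ) ^ (k+1) * (n.choose (k+1) : ℝ))]
  have key : ∑ k ∈ Finset.range (n+1), (3:ℝ) ^ k * (n.choose k : ℝ) = 4 ^ n := by
    have hb := add_pow (3:ℝ) 1 n
    rw [show (3:ℝ) + 1 = 4 by norm_num] at hb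
    rw [hb]
    apply Finset.sum_congr rfl
    intro k _
    rw [one_pow, mul_one]
  have hsplit := Finset.sum_range_succ' (fun k => (3:ℝ) ^ k * (n.choose k : ℝ)) n
  rw [key] at hsplit
  simp only [pow_zero, Nat.choose_zero_right, Nat.cast_one, one_mul] at hsplit
  linarith

lemma mid_nonneg (hn : 2 ≤ n) (e : ℕ) (he : e + 1 < n) :
    0 ≤ 1 - dc n (e+1) - uc n e := by
  have hD := DD_pos (n := n) hn
  have hEN : ((e:ℝ) + 2) ≤ (n:ℝ) := by exact_mod_cast he
  have hE : (0:ℝ) ≤ (e:ℝ) := Nat.cast_nonneg e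
  have hsum : dc n (e+1) + uc n e ≤ 1 := by
    unfold dc uc
    rw [← add_div, div_le_one hD]
    push_cast
    unfold DD
    nlinarith [sq_nonneg (4*((e:ℝ)+1) - 3*(n:ℝ) - 1), mul_nonneg hE (sub_nonneg.mpr hEN),
      sq_nonneg ((n:ℝ) - 2), mul_nonneg (sub_nonneg.mpr hEN) (sub_nonneg.mpr hEN),
      mul_nonneg hE hE]
  linarith

lemma lam_nonneg (hn : 2 ≤ n) : 0 ≤ lam n := by
  have hD := DD_pos (n := n) hn
  have h2 : (2:ℝ) ≤ (n:ℝ) := by exact_mod_cast hn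
  unfold lam
  rw [sub_nonneg, div_le_one hD]
  unfold DD
  nlinarith

lemma lam_le (hn : 2 ≤ n) : lam n ≤ 1 - 2 / (5 * (n:ℝ)) := by
  have hD := DD_pos (n := n) hn
  have h2 : (2:ℝ) ≤ (n:ℝ) := by exact_mod_cast hn
  unfold lam
  have hn5 : (0:ℝ) < 5 * (n:ℝ) := by linarith
  rw [sub_le_sub_iff_left, div_le_div_iff₀ hn5 hD]
  unfold DD
  nlinarith

set_option maxHeartbeats 1000000 in
lemma key_ineq (hn : 2 ≤ n) (e : ℕ) (he : e + 1 < n) :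
    dc n e * wt (e-1) + (1 - dc n (e+1) - uc n e) * wt e + uc n (e+1) * wt (e+1)
      ≤ lam n * wt e := by
  have hD := DD_pos (n := n) hn
  have hDne : DD n ≠ 0 := ne_of_gt hD
  have hEN : ((e:ℝ) + 2) ≤ (n:ℝ) := by exact_mod_cast he
  rw [← sub_nonpos]
  rcases Nat.eq_zero_or_pos e with he0 | he1
  · subst he0
    have hN0 : ((n:ℝ)) ≠ 0 := by
      have : (2:ℝ) ≤ (n:ℝ) := by exact_mod_cast hn
      linarith
    have hN1 : ((n:ℝ) - 1) ≠ 0 := by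
      have : (2:ℝ) ≤ (n:ℝ) := by exact_mod_cast hn
      linarith
    have heq : dc n 0 * wt (0-1) + (1 - dc n (0+1) - uc n 0) * wt 0 + uc n (0+1) * wt (0+1)
        - lam n * wt 0 = -2 / DD n := by
      unfold dc uc wt lam DD
      push_cast
      field_simp
      ring
    rw [heq]
    apply div_nonpos_of_nonpos_of_nonneg (by norm_num) (le_of_lt hD)
  · have hE1 : (1:ℝ) ≤ (e:ℝ) := by exact_mod_cast he1
    have hcast : (((e - 1 : ℕ)):ℝ) = (e:ℝ) - 1 := by
      rw [Nat.cast_sub he1, Nat.cast_one]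
    have e1 : dc n e * wt (e-1) + (1 - dc n (e+1) - uc n e) * wt e + uc n (e+1) * wt (e+1)
        = (2*((e:ℝ)+1)*(e:ℝ) * wt (e-1)
            + (DD n - (2*((e:ℝ)+2)*((e:ℝ)+1) + 6*((e:ℝ)+1)*((n:ℝ)-((e:ℝ)+1)))) * wt e
            + 6*((e:ℝ)+2)*((n:ℝ)-((e:ℝ)+2)) * wt (e+1)) / DD n := by
      unfold dc uc
      push_cast
      field_simp
      ring
    have e2 : lam n * wt e = ((DD n - 2*((n:ℝ)+1)) * wt e) / DD n := by
      unfold lam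
      field_simp
    rw [e1, e2, div_sub_div_same]
    apply div_nonpos_of_nonpos_of_nonneg _ (le_of_lt hD)
    have e3 : 2*((e:ℝ)+1)*(e:ℝ) * wt (e-1)
          + 6*((e:ℝ)+2)*((n:ℝ)-((e:ℝ)+2)) * wt (e+1)
          + 2*((n:ℝ)+1) * wt e
          - (2*((e:ℝ)+2)*((e:ℝ)+1) + 6*((e:ℝ)+1)*((n:ℝ)-((e:ℝ)+1))) * wt e
        = -4*(e:ℝ)*((n:ℝ)+1) / (((e:ℝ)+1) * (((e:ℝ)+2) * ((e:ℝ)+3))) := by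
      unfold wt
      rw [hcast]
      push_cast
      have h1 : ((e:ℝ)) ≠ 0 := by linarith
      have h2 : ((e:ℝ) + 1) ≠ 0 := by linarith
      have h3 : ((e:ℝ) + 2) ≠ 0 := by linarith
      have h4 : ((e:ℝ) + 3) ≠ 0 := by linarith
      have r1 : (e:ℝ) - 1 + 1 = (e:ℝ) := by ring
      have r2 : (e:ℝ) - 1 + 2 = (e:ℝ) + 1 := by ring
      have r3 : (e:ℝ) + 1 + 1 = (e:ℝ) + 2 := by ring
      have r4 : (e:ℝ) + 1 + 2 = (e:ℝ) + 3 := by ring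
      rw [r1, r2, r3, r4]
      field_simp
      ring
    have e4 : -4*(e:ℝ)*((n:ℝ)+1) / (((e:ℝ)+1) * (((e:ℝ)+2) * ((e:ℝ)+3))) ≤ 0 := by
      apply div_nonpos_of_nonpos_of_nonneg _ (by positivity)
      nlinarith
    linarith [e3, e4]

/-- edge-Lipschitz property with weight `wt` -/
def EdgeBd (n : ℕ) (c : ℝ) (ψ : Fin n → ℝ) : Prop :=
  ∀ e : ℕ, ∀ he : e + 1 < n,
    |ψ ⟨e+1, he⟩ - ψ ⟨e, Nat.lt_of_succ_lt he⟩| ≤ c * wt e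

lemma stationary (hn : 2 ≤ n) :
    Matrix.vecMul (zeroChainPi n) (zeroChainP n) = zeroChainPi n := by
  funext j
  rw [vecMul_apply]
  have T1 : ext (zeroChainPi n) ((j:ℕ)+1) * dc n ((j:ℕ)+1) = zeroChainPi n j * uc n (j:ℕ) := by
    by_cases h : (j:ℕ) + 1 < n
    · rw [← db hn (j:ℕ) h, ext_coe]
    · have hj : (j:ℕ) + 1 = n := by have := j.isLt; omega
      have hz : ext (zeroChainPi n) ((j:ℕ)+1) = 0 := by
        unfold ext; rw [dif_neg h]
      have hu : uc n (j:ℕ) = 0 := by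
        unfold uc
        have h0 : (n:ℝ) - (((j:ℕ):ℝ) + 1) = 0 := by
          have : ((j:ℕ):ℝ) + 1 = (n:ℝ) := by exact_mod_cast hj
          linarith
        rw [h0]
        ring
      rw [hz, hu, zero_mul, mul_zero]
  have T2 : (if (j:ℕ) = 0 then 0 else ext (zeroChainPi n) ((j:ℕ)-1) * uc n ((j:ℕ)-1))
      = zeroChainPi n j * dc n (j:ℕ) := by
    by_cases hj : (j:ℕ) = 0
    · rw [if_pos hj]
      have hd : dc n (j:ℕ) = 0 := by unfold dc; rw [hj]; norm_num
      rw [hd, mul_zero]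
    · rw [if_neg hj]
      have hk : ((j:ℕ)-1) + 1 < n := by have := j.isLt; omega
      have hh := db hn ((j:ℕ)-1) hk
      rw [show (j:ℕ)-1+1 = (j:ℕ) from by omega] at hh
      rw [hh, ext_coe]
  rw [T1, T2, mc_eq]
  ring

lemma stationary_pow (hn : 2 ≤ n) (t : ℕ) :
    Matrix.vecMul (zeroChainPi n) (zeroChainP n ^ t) = zeroChainPi n := by
  induction t with
  | zero => rw [pow_zero, Matrix.vecMul_one]
  | succ t ih => rw [pow_succ, ← Matrix.vecMul_vecMul, ih, stationary hn]

lemma mulVec_mk (φ : Fin n → ℝ) (k : ℕ) (hk : k < n) :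
    (zeroChainP n).mulVec φ ⟨k, hk⟩ =
      dc n k * ext φ (k - 1) + mc n k * ext φ k + uc n k * ext φ (k + 1) :=
  mulVec_apply φ ⟨k, hk⟩

lemma step (hn : 2 ≤ n) {c : ℝ} (hc : 0 ≤ c) {ψ : Fin n → ℝ} (h : EdgeBd n c ψ) :
    EdgeBd n (lam n * c) ((zeroChainP n).mulVec ψ) := by
  intro e he
  have hen : e < n := Nat.lt_of_succ_lt he
  have hb : ∀ k : ℕ, k + 1 < n → |ext ψ (k+1) - ext ψ k| ≤ c * wt k := by
    intro k hk
    rw [ext_mk ψ (k+1) hk, ext_mk ψ k (Nat.lt_of_succ_lt hk)]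
    exact h k hk
  have hA : (zeroChainP n).mulVec ψ ⟨e+1, he⟩ - (zeroChainP n).mulVec ψ ⟨e, hen⟩
      = dc n e * (ext ψ e - ext ψ (e-1)) + (1 - dc n (e+1) - uc n e) * (ext ψ (e+1) - ext ψ e)
        + uc n (e+1) * (ext ψ (e+2) - ext ψ (e+1)) := by
    rw [mulVec_mk ψ (e+1) he, mulVec_mk ψ e hen, mc_eq, mc_eq]
    rw [show e + 1 - 1 = e from rfl]
    ring
  rw [hA]
  have B1 : |dc n e * (ext ψ e - ext ψ (e-1))| ≤ dc n e * (c * wt (e-1)) := by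
    rcases Nat.eq_zero_or_pos e with h0 | h1
    · subst h0
      have hd : dc n 0 = 0 := by unfold dc; norm_num
      rw [hd, zero_mul, zero_mul, abs_zero]
    · rw [abs_mul, abs_of_nonneg (dc_nonneg e hn)]
      apply mul_le_mul_of_nonneg_left _ (dc_nonneg e hn)
      have hk : (e-1) + 1 < n := by omega
      have hbb := hb (e-1) hk
      rw [show e - 1 + 1 = e from by omega] at hbb
      exact hbb
  have B2 : |(1 - dc n (e+1) - uc n e) * (ext ψ (e+1) - ext ψ e)|
      ≤ (1 - dc n (e+1) - uc n e) * (c * wt e) := by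
    rw [abs_mul, abs_of_nonneg (mid_nonneg hn e he)]
    exact mul_le_mul_of_nonneg_left (hb e he) (mid_nonneg hn e he)
  have B3 : |uc n (e+1) * (ext ψ (e+2) - ext ψ (e+1))| ≤ uc n (e+1) * (c * wt (e+1)) := by
    by_cases h2 : e + 2 < n
    · rw [abs_mul, abs_of_nonneg (uc_nonneg (e+1) hn (by omega))]
      exact mul_le_mul_of_nonneg_left (hb (e+1) h2) (uc_nonneg (e+1) hn (by omega))
    · have h2n : e + 2 = n := by omega
      have hu : uc n (e+1) = 0 := by
        unfold uc
        have h0 : (n:ℝ) - (((e+1:ℕ):ℝ) + 1) = 0 := by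
          have : ((e:ℝ)) + 2 = (n:ℝ) := by exact_mod_cast h2n
          push_cast
          linarith
        rw [h0]
        ring
      rw [hu, zero_mul, zero_mul, abs_zero]
  calc |dc n e * (ext ψ e - ext ψ (e-1)) + (1 - dc n (e+1) - uc n e) * (ext ψ (e+1) - ext ψ e)
        + uc n (e+1) * (ext ψ (e+2) - ext ψ (e+1))|
      ≤ |dc n e * (ext ψ e - ext ψ (e-1)) + (1 - dc n (e+1) - uc n e) * (ext ψ (e+1) - ext ψ e)|
        + |uc n (e+1) * (ext ψ (e+2) - ext ψ (e+1))| := abs_add_le _ _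
    _ ≤ |dc n e * (ext ψ e - ext ψ (e-1))| + |(1 - dc n (e+1) - uc n e) * (ext ψ (e+1) - ext ψ e)|
        + |uc n (e+1) * (ext ψ (e+2) - ext ψ (e+1))| := by
          have := abs_add_le (dc n e * (ext ψ e - ext ψ (e-1)))
            ((1 - dc n (e+1) - uc n e) * (ext ψ (e+1) - ext ψ e))
          linarith
    _ ≤ dc n e * (c * wt (e-1)) + (1 - dc n (e+1) - uc n e) * (c * wt e)
        + uc n (e+1) * (c * wt (e+1)) := by linarith [B1, B2, B3]
    _ = c * (dc n e * wt (e-1) + (1 - dc n (e+1) - uc n e) * wt e + uc n (e+1) * wt (e+1)) := by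
          ring
    _ ≤ c * (lam n * wt e) := mul_le_mul_of_nonneg_left (key_ineq hn e he) hc
    _ = lam n * c * wt e := by ring

lemma iterBd (hn : 2 ≤ n) {c : ℝ} (hc : 0 ≤ c) {s : Fin n → ℝ} (h : EdgeBd n c s) (t : ℕ) :
    EdgeBd n (lam n ^ t * c) ((zeroChainP n ^ t).mulVec s) := by
  induction t with
  | zero =>
      rw [pow_zero, pow_zero, one_mul, Matrix.one_mulVec]
      exact h
  | succ t ih =>
      have hstep := step hn (mul_nonneg (pow_nonneg (lam_nonneg hn) t) hc) ih
      have hψ : (zeroChainP n ^ (t+1)).mulVec s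
          = (zeroChainP n).mulVec ((zeroChainP n ^ t).mulVec s) := by
        rw [Matrix.mulVec_mulVec, pow_succ']
      have hcc : lam n ^ (t+1) * c = lam n * (lam n ^ t * c) := by ring
      rw [hψ, hcc]
      exact hstep

lemma osc (hn : 2 ≤ n) {c : ℝ} (hc : 0 ≤ c) {ψ : Fin n → ℝ} (h : EdgeBd n c ψ) :
    ∀ (x : ℕ) (hx : x < n), |ψ ⟨x, hx⟩ - ψ ⟨0, by omega⟩| ≤ c := by
  have key : ∀ (x : ℕ) (hx : x < n),
      |ψ ⟨x, hx⟩ - ψ ⟨0, by omega⟩| ≤ c * (1 - 1/((x:ℝ)+1)) := by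
    intro x
    induction x with
    | zero =>
        intro hx
        norm_num
    | succ x ih =>
        intro hx
        have hx' : x < n := Nat.lt_of_succ_lt hx
        have h1 := ih hx'
        have h2 := h x hx
        have tri : |ψ ⟨x+1, hx⟩ - ψ ⟨0, by omega⟩|
            ≤ |ψ ⟨x+1, hx⟩ - ψ ⟨x, Nat.lt_of_succ_lt hx⟩|
              + |ψ ⟨x, Nat.lt_of_succ_lt hx⟩ - ψ ⟨0, by omega⟩| := abs_sub_le _ _ _
        have tele : c * wt x + c * (1 - 1/((x:ℝ)+1)) = c * (1 - 1/(((x+1:ℕ):ℝ)+1)) := by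
          unfold wt
          have hx1 : ((x:ℝ)+1) ≠ 0 := by positivity
          have hx2 : ((x:ℝ)+2) ≠ 0 := by positivity
          push_cast
          field_simp
          ring
        linarith [h1, h2, tri, tele.le]
  intro x hx
  have h1 := key x hx
  have h2 : c * (1 - 1/((x:ℝ)+1)) ≤ c := by
    have : (0:ℝ) ≤ 1/((x:ℝ)+1) := by positivity
    nlinarith
  linarith

lemma pi_nonneg (hn : 2 ≤ n) (i : Fin n) : 0 ≤ zeroChainPi n i := by
  have h1 : (1:ℝ) < 4 ^ n := one_lt_pow₀ (by norm_num) (by omega)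
  unfold zeroChainPi
  apply div_nonneg _ (by linarith)
  positivity

end ZChainAux

/-- The zero chain mixes in time `O(n log(n/ε))`: there is a universal constant `C`
such that after `t ≥ C n log(n/ε)` steps, the total variation distance to `π₀` is
at most `ε`, for every starting distribution. -/
theorem zero_chain_mixing :
    ∃ C : ℝ, 0 < C ∧ ∀ n : ℕ, 2 ≤ n → ∀ ε : ℝ, 0 < ε → ε < 1 →
      ∀ v : Fin n → ℝ, (∀ i, 0 ≤ v i) → ∑ i, v i = 1 →
      ∀ t : ℕ, C * n * Real.log (n / ε) ≤ t →
        (1 / 2) * ∑ y, |Matrix.vecMul v (zeroChainP n ^ t) y - zeroChainPi n y| ≤ ε := by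
  classical
  refine ⟨10, by norm_num, ?_⟩
  intro n hn ε hε hε1 v hv hsumv t ht
  have hn0 : 0 < n := by omega
  have hnR : (2:ℝ) ≤ (n:ℝ) := by exact_mod_cast hn
  set a : Fin n → ℝ := fun y => Matrix.vecMul v (zeroChainP n ^ t) y - zeroChainPi n y with ha
  set s : Fin n → ℝ := fun y => if 0 ≤ a y then 1 else -1 with hs
  have hsπ : ∑ i, zeroChainPi n i = 1 := ZChainAux.sum_pi hn
  -- edge bound on the sign vector
  have hS : ZChainAux.EdgeBd n (2 * (n:ℝ)^2) s := by
    intro e he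
    have hs1 : ∀ y, s y = 1 ∨ s y = -1 := by
      intro y
      by_cases h : 0 ≤ a y
      · left; simp [hs, h]
      · right; simp [hs, h]
    have habs2 : |s ⟨e+1, he⟩ - s ⟨e, Nat.lt_of_succ_lt he⟩| ≤ 2 := by
      rcases hs1 ⟨e+1, he⟩ with h1 | h1 <;> rcases hs1 ⟨e, Nat.lt_of_succ_lt he⟩ with h2 | h2 <;>
        rw [h1, h2] <;> norm_num
    have hwt : 2 ≤ 2 * (n:ℝ)^2 * ZChainAux.wt e := by
      unfold ZChainAux.wt
      have he1 : ((e:ℝ)) + 2 ≤ (n:ℝ) := by exact_mod_cast he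
      have hp : (0:ℝ) < ((e:ℝ)+1) * ((e:ℝ)+2) := by positivity
      rw [mul_one_div, le_div_iff₀ hp]
      nlinarith [Nat.cast_nonneg (α := ℝ) e]
    linarith
  have hcpos : (0:ℝ) ≤ 2 * (n:ℝ)^2 := by positivity
  have hψbd := ZChainAux.iterBd hn hcpos hS t
  have hKnn : 0 ≤ ZChainAux.lam n ^ t * (2*(n:ℝ)^2) :=
    mul_nonneg (pow_nonneg (ZChainAux.lam_nonneg hn) t) hcpos
  have hosc := ZChainAux.osc hn hKnn hψbd
  have hosc' : ∀ x : Fin n, |(zeroChainP n ^ t).mulVec s x - (zeroChainP n ^ t).mulVec s ⟨0, hn0⟩|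
      ≤ ZChainAux.lam n ^ t * (2*(n:ℝ)^2) := by
    intro x
    have hh := hosc x.1 x.2
    simpa using hh
  -- sum identities
  have e0 : ∀ y, |a y| = a y * s y := by
    intro y
    by_cases h : 0 ≤ a y
    · rw [abs_of_nonneg h]
      simp [hs, h]
    · rw [abs_of_neg (lt_of_not_ge h)]
      simp only [hs, if_neg h]
      ring
  have e1 : ∑ y, |a y| = ∑ y, a y * s y := Finset.sum_congr rfl (fun y _ => e0 y)
  have e2 : ∑ y, a y * s y
      = ∑ x, (v x - zeroChainPi n x) * (zeroChainP n ^ t).mulVec s x := by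
    have d1 : ∑ x, v x * (zeroChainP n ^ t).mulVec s x
        = ∑ y, Matrix.vecMul v (zeroChainP n ^ t) y * s y := by
      have hd := Matrix.dotProduct_mulVec v (zeroChainP n ^ t) s
      simpa [dotProduct] using hd
    have d2 : ∑ x, zeroChainPi n x * (zeroChainP n ^ t).mulVec s x
        = ∑ y, zeroChainPi n y * s y := by
      have hd := Matrix.dotProduct_mulVec (zeroChainPi n) (zeroChainP n ^ t) s
      rw [ZChainAux.stationary_pow hn t] at hd
      simpa [dotProduct] using hd
    calc ∑ y, a y * s y
        = ∑ y, (Matrix.vecMul v (zeroChainP n ^ t) y * s y - zeroChainPi n y * s y) := by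
          apply Finset.sum_congr rfl; intro y _; rw [ha]; ring
      _ = (∑ y, Matrix.vecMul v (zeroChainP n ^ t) y * s y) - ∑ y, zeroChainPi n y * s y :=
          Finset.sum_sub_distrib _ _
      _ = (∑ x, v x * (zeroChainP n ^ t).mulVec s x)
            - ∑ x, zeroChainPi n x * (zeroChainP n ^ t).mulVec s x := by rw [d1, d2]
      _ = ∑ x, (v x - zeroChainPi n x) * (zeroChainP n ^ t).mulVec s x := by
          rw [← Finset.sum_sub_distrib]
          apply Finset.sum_congr rfl; intro x _; ring
  have hz : ∑ x, (v x - zeroChainPi n x) = 0 := by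
    rw [Finset.sum_sub_distrib, hsumv, hsπ]; ring
  have e3 : ∑ x, (v x - zeroChainPi n x) * (zeroChainP n ^ t).mulVec s x
      = ∑ x, (v x - zeroChainPi n x)
          * ((zeroChainP n ^ t).mulVec s x - (zeroChainP n ^ t).mulVec s ⟨0, hn0⟩) := by
    have hexp : ∑ x, (v x - zeroChainPi n x)
          * ((zeroChainP n ^ t).mulVec s x - (zeroChainP n ^ t).mulVec s ⟨0, hn0⟩)
        = (∑ x, (v x - zeroChainPi n x) * (zeroChainP n ^ t).mulVec s x)
          - (∑ x, (v x - zeroChainPi n x)) * (zeroChainP n ^ t).mulVec s ⟨0, hn0⟩ := by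
      rw [Finset.sum_mul, ← Finset.sum_sub_distrib]
      apply Finset.sum_congr rfl; intro x _; ring
    rw [hexp, hz]; ring
  have e4 : ∑ x, (v x - zeroChainPi n x)
        * ((zeroChainP n ^ t).mulVec s x - (zeroChainP n ^ t).mulVec s ⟨0, hn0⟩)
      ≤ 2 * (ZChainAux.lam n ^ t * (2*(n:ℝ)^2)) := by
    have hterm : ∀ x : Fin n, (v x - zeroChainPi n x)
          * ((zeroChainP n ^ t).mulVec s x - (zeroChainP n ^ t).mulVec s ⟨0, hn0⟩)
        ≤ (v x + zeroChainPi n x) * (ZChainAux.lam n ^ t * (2*(n:ℝ)^2)) := by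
      intro x
      have h1 := le_abs_self ((v x - zeroChainPi n x)
        * ((zeroChainP n ^ t).mulVec s x - (zeroChainP n ^ t).mulVec s ⟨0, hn0⟩))
      rw [abs_mul] at h1
      have h2 : |v x - zeroChainPi n x| ≤ v x + zeroChainPi n x := by
        rw [abs_le]
        constructor <;> nlinarith [hv x, ZChainAux.pi_nonneg hn x]
      have h3 := hosc' x
      have h4 : 0 ≤ v x + zeroChainPi n x := add_nonneg (hv x) (ZChainAux.pi_nonneg hn x)
      calc (v x - zeroChainPi n x)
            * ((zeroChainP n ^ t).mulVec s x - (zeroChainP n ^ t).mulVec s ⟨0, hn0⟩)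
          ≤ |v x - zeroChainPi n x|
            * |(zeroChainP n ^ t).mulVec s x - (zeroChainP n ^ t).mulVec s ⟨0, hn0⟩| := h1
        _ ≤ (v x + zeroChainPi n x) * (ZChainAux.lam n ^ t * (2*(n:ℝ)^2)) :=
            mul_le_mul h2 h3 (abs_nonneg _) h4
    calc ∑ x, (v x - zeroChainPi n x)
          * ((zeroChainP n ^ t).mulVec s x - (zeroChainP n ^ t).mulVec s ⟨0, hn0⟩)
        ≤ ∑ x, (v x + zeroChainPi n x) * (ZChainAux.lam n ^ t * (2*(n:ℝ)^2)) :=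
          Finset.sum_le_sum (fun x _ => hterm x)
      _ = (∑ x, (v x + zeroChainPi n x)) * (ZChainAux.lam n ^ t * (2*(n:ℝ)^2)) :=
          (Finset.sum_mul _ _ _).symm
      _ = 2 * (ZChainAux.lam n ^ t * (2*(n:ℝ)^2)) := by
          rw [Finset.sum_add_distrib, hsumv, hsπ]; ring
  -- numeric bound
  have hKε : ZChainAux.lam n ^ t * (2*(n:ℝ)^2) ≤ ε := by
    have hlam1 : ZChainAux.lam n ≤ Real.exp (-(2/(5*(n:ℝ)))) := by
      have h1 := ZChainAux.lam_le hn
      have h2 := Real.add_one_le_exp (-(2/(5*(n:ℝ))))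
      linarith
    have hpow : ZChainAux.lam n ^ t ≤ Real.exp (-(2/(5*(n:ℝ)))) ^ t :=
      pow_le_pow_left₀ (ZChainAux.lam_nonneg hn) hlam1 t
    have hexp : Real.exp (-(2/(5*(n:ℝ)))) ^ t = Real.exp (-((t:ℝ)*(2/(5*(n:ℝ))))) := by
      rw [← Real.exp_nat_mul]
      congr 1
      ring
    have hL : Real.log (2*(n:ℝ)^2/ε) ≤ 4 * Real.log ((n:ℝ)/ε) := by
      have harg : 2*(n:ℝ)^2/ε ≤ ((n:ℝ)/ε)^4 := by
        rw [div_pow, div_le_div_iff₀ hε (pow_pos hε 4)]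
        have hε4 : ε^4 ≤ ε := by
          calc ε^4 ≤ ε^1 := pow_le_pow_of_le_one hε.le hε1.le (by norm_num)
            _ = ε := pow_one ε
        have hn4 : 2*(n:ℝ)^2 ≤ (n:ℝ)^4 := by
          have h4 : (2:ℝ) ≤ (n:ℝ)^2 := by nlinarith
          nlinarith [mul_le_mul_of_nonneg_right h4 (sq_nonneg ((n:ℝ)))]
        calc 2*(n:ℝ)^2 * ε^4 ≤ 2*(n:ℝ)^2 * ε := by
              apply mul_le_mul_of_nonneg_left hε4 (by positivity)
          _ ≤ (n:ℝ)^4 * ε := mul_le_mul_of_nonneg_right hn4 hε.le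
      have hpos : (0:ℝ) < 2*(n:ℝ)^2/ε := by positivity
      calc Real.log (2*(n:ℝ)^2/ε) ≤ Real.log (((n:ℝ)/ε)^4) := Real.log_le_log hpos harg
        _ = 4 * Real.log ((n:ℝ)/ε) := by rw [Real.log_pow]; norm_num
    have ht2 : Real.log (2*(n:ℝ)^2/ε) ≤ (t:ℝ)*(2/(5*(n:ℝ))) := by
      have h5n : (0:ℝ) < 5*(n:ℝ) := by linarith
      have h4L : 4 * Real.log ((n:ℝ)/ε) ≤ (t:ℝ)*(2/(5*(n:ℝ))) := by
        rw [show (t:ℝ)*(2/(5*(n:ℝ))) = (2*(t:ℝ))/(5*(n:ℝ)) from by ring, le_div_iff₀ h5n]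
        nlinarith [ht]
      linarith
    have hexp2 : Real.exp (-((t:ℝ)*(2/(5*(n:ℝ))))) ≤ ε/(2*(n:ℝ)^2) := by
      have hp2 : (0:ℝ) < ε/(2*(n:ℝ)^2) := by positivity
      have hlog : Real.log (ε/(2*(n:ℝ)^2)) = - Real.log (2*(n:ℝ)^2/ε) := by
        rw [show ε/(2*(n:ℝ)^2) = (2*(n:ℝ)^2/ε)⁻¹ from by
          rw [inv_div], Real.log_inv]
      calc Real.exp (-((t:ℝ)*(2/(5*(n:ℝ)))))
          ≤ Real.exp (Real.log (ε/(2*(n:ℝ)^2))) := by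
            apply Real.exp_le_exp.mpr
            rw [hlog]
            linarith
        _ = ε/(2*(n:ℝ)^2) := Real.exp_log hp2
    calc ZChainAux.lam n ^ t * (2*(n:ℝ)^2)
        = 2*(n:ℝ)^2 * (ZChainAux.lam n ^ t) := by ring
      _ ≤ 2*(n:ℝ)^2 * Real.exp (-((t:ℝ)*(2/(5*(n:ℝ))))) := by
          apply mul_le_mul_of_nonneg_left _ (by positivity)
          rw [← hexp]
          exact hpow
      _ ≤ 2*(n:ℝ)^2 * (ε/(2*(n:ℝ)^2)) := mul_le_mul_of_nonneg_left hexp2 (by positivity)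
      _ = ε := by field_simp
  have final : ∑ y, |a y| ≤ 2 * (ZChainAux.lam n ^ t * (2*(n:ℝ)^2)) := by
    rw [e1, e2, e3]
    exact e4
  show (1 / 2) * ∑ y, |a y| ≤ ε
  linarith
end

section
/- Let X be a measurable random variable on a probability space with X ≥ 0 almost surely, let η ≥ 0, and let C ≥ 0, a > 0 be constants such that ℙ(X ≥ δ + η) ≤ C·exp(−a·δ²) for every δ > 0. Then for every real m ≥ 2, 𝔼[X^m] ≤ C · (2m/a)^{m/2} + (2η)^m. -/
open MeasureTheory Real Set

lemma gamma_add_one_le_rpow_self {x : ℝ} (hx : 1 ≤ x) : Real.Gamma (x + 1) ≤ x ^ x := by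
  have hx0 : 0 < x := by linarith
  set n := ⌊x⌋₊ with hn
  have hn1 : 1 ≤ n := Nat.le_floor (by exact_mod_cast hx)
  have hn0 : (0:ℝ) < n := by exact_mod_cast hn1
  have hnx : (n:ℝ) ≤ x := Nat.floor_le hx0.le
  have hxn : x < n + 1 := Nat.lt_floor_add_one x
  have hlog : (n:ℝ) * Real.log n + (x - n) * Real.log ((n:ℝ)+1) ≤ x * Real.log x := by
    have h1 : Real.log ((n:ℝ)/x) ≤ (n:ℝ)/x - 1 := Real.log_le_sub_one_of_pos (by positivity)
    have h2 : Real.log ((n:ℝ)/x) = Real.log n - Real.log x :=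
      Real.log_div (ne_of_gt hn0) (ne_of_gt hx0)
    have h3 : x - (n:ℝ) ≤ x * (Real.log x - Real.log n) := by
      have h := mul_le_mul_of_nonneg_left h1 hx0.le
      rw [h2] at h
      have hx' : x * ((n:ℝ)/x - 1) = n - x := by field_simp
      nlinarith
    have h4 : Real.log ((n:ℝ)+1) ≤ Real.log n + 1 := by
      have h5 : Real.log (((n:ℝ)+1)/n) ≤ ((n:ℝ)+1)/n - 1 := Real.log_le_sub_one_of_pos (by positivity)
      have h6 : Real.log (((n:ℝ)+1)/n) = Real.log ((n:ℝ)+1) - Real.log n :=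
        Real.log_div (by positivity) (ne_of_gt hn0)
      have h7 : ((n:ℝ)+1)/n - 1 = 1/n := by field_simp; ring
      have h8 : (1:ℝ)/n ≤ 1 := by
        rw [div_le_one hn0]; exact_mod_cast hn1
      linarith
    have ht0 : 0 ≤ x - n := by linarith
    nlinarith [mul_le_mul_of_nonneg_left h4 ht0]
  rcases eq_or_lt_of_le hnx with heq | hlt
  · rw [← heq, Real.Gamma_nat_eq_factorial]
    have h9 : ((n:ℝ)) ^ ((n:ℝ)) = ((n ^ n : ℕ) : ℝ) := by
      rw [Real.rpow_natCast]; push_cast; ring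
    rw [h9]
    exact_mod_cast Nat.factorial_le_pow n
  · set t := x - n with htdef
    have ht : 0 < t := by simp only [htdef]; linarith
    have ht1 : t < 1 := by simp only [htdef]; linarith
    have key := Real.Gamma_mul_add_mul_le_rpow_Gamma_mul_rpow_Gamma
      (s := (n:ℝ)+1) (t := (n:ℝ)+2) (a := 1 - t) (b := t)
      (by positivity) (by positivity) (by linarith) ht (by ring)
    have harg : (1-t) * ((n:ℝ)+1) + t * ((n:ℝ)+2) = x + 1 := by
      simp only [htdef]; ring
    rw [harg] at key
    have hfac1 : Real.Gamma ((n:ℝ)+1) = (Nat.factorial n : ℝ) := by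
      exact_mod_cast Real.Gamma_nat_eq_factorial n
    have hfac2 : Real.Gamma ((n:ℝ)+2) = (Nat.factorial (n+1) : ℝ) := by
      have h := Real.Gamma_nat_eq_factorial (n+1)
      push_cast at h ⊢
      rw [show (n:ℝ) + 2 = (n:ℝ) + 1 + 1 by ring]
      exact_mod_cast h
    rw [hfac1, hfac2] at key
    refine key.trans ?_
    have hA : (0:ℝ) < Nat.factorial n := by exact_mod_cast Nat.factorial_pos n
    have hB : (0:ℝ) < Nat.factorial (n+1) := by exact_mod_cast Nat.factorial_pos (n+1)
    rw [Real.rpow_def_of_pos hA, Real.rpow_def_of_pos hB, Real.rpow_def_of_pos hx0,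
      ← Real.exp_add]
    apply Real.exp_le_exp.mpr
    have hlogA : Real.log (Nat.factorial n : ℝ) ≤ n * Real.log n := by
      have h10 : (Nat.factorial n : ℝ) ≤ ((n:ℝ))^(n:ℕ) := by exact_mod_cast Nat.factorial_le_pow n
      calc Real.log (Nat.factorial n : ℝ) ≤ Real.log (((n:ℝ))^(n:ℕ)) := by
            apply Real.log_le_log hA h10
        _ = n * Real.log n := by rw [Real.log_pow]
    have hlogB : Real.log (Nat.factorial (n+1) : ℝ) = Real.log ((n:ℝ)+1) + Real.log (Nat.factorial n : ℝ) := by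
      rw [show (Nat.factorial (n+1) : ℝ) = ((n:ℝ)+1) * (Nat.factorial n : ℝ) by push_cast [Nat.factorial_succ]; ring,
        Real.log_mul (by positivity) (ne_of_gt hA)]
    rw [hlogB]
    nlinarith [hlog, hlogA]

/-- Moment bounds from a shifted Gaussian tail bound: if `X ≥ 0` a.s. and
`ℙ(X ≥ δ + η) ≤ C e^{−aδ²}` for all `δ > 0`, then for `m ≥ 2`,
`𝔼[X^m] ≤ C (2m/a)^{m/2} + (2η)^m`. -/
theorem moment_bound_from_shifted_tail {Ω : Type*} [MeasurableSpace Ω]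
    (ℙ : Measure Ω) [IsProbabilityMeasure ℙ]
    (X : Ω → ℝ) (hX : Measurable X) (h0 : ∀ᵐ ω ∂ℙ, 0 ≤ X ω)
    (η C a : ℝ) (hη : 0 ≤ η) (hC : 0 ≤ C) (ha : 0 < a)
    (htail : ∀ δ : ℝ, 0 < δ →
      ℙ {ω | δ + η ≤ X ω} ≤ ENNReal.ofReal (C * Real.exp (-a * δ ^ 2)))
    (m : ℝ) (hm : 2 ≤ m) :
    ∫⁻ ω, ENNReal.ofReal (X ω ^ m) ∂ℙ
      ≤ ENNReal.ofReal (C * (2 * m / a) ^ (m / 2) + (2 * η) ^ m) := by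
  have hm0 : (0:ℝ) < m := by linarith
  set Z : Ω → ℝ := fun ω => max (X ω - η) 0 with hZ
  have hZm : Measurable Z := (hX.sub measurable_const).max measurable_const
  have hZnn : ∀ ω, 0 ≤ Z ω := fun ω => le_max_right _ _
  set f : Ω → ℝ := fun ω => 2 * Z ω with hf
  have hfm : Measurable f := hZm.const_mul 2
  have hfnn : ∀ ω, 0 ≤ f ω := fun ω => by have := hZnn ω; simp only [hf]; linarith
  -- key tail integral bound
  have key : ∫⁻ ω, ENNReal.ofReal (f ω ^ m) ∂ℙ ≤ ENNReal.ofReal (C * (2*m/a) ^ (m/2)) := by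
    set g : ℝ → ℝ := fun t => m * t ^ (m-1) with hg
    have g_intble : ∀ t > (0:ℝ), IntervalIntegrable g volume 0 t := fun t _ =>
      (intervalIntegral.intervalIntegrable_rpow' (by linarith)).const_mul m
    have g_nn : ∀ᵐ t ∂(volume.restrict (Ioi (0:ℝ))), 0 ≤ g t := by
      filter_upwards [ae_restrict_mem measurableSet_Ioi] with t ht
      have : (0:ℝ) < t := ht
      positivity
    have layer := lintegral_comp_eq_lintegral_meas_le_mul ℙ
      (Filter.Eventually.of_forall hfnn) hfm.aemeasurable g_intble g_nn
    have hG : ∀ ω, (∫ t in (0:ℝ)..f ω, g t) = f ω ^ m := by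
      intro ω
      rw [hg]
      simp only
      rw [intervalIntegral.integral_const_mul, integral_rpow (Or.inl (by linarith)),
        sub_add_cancel, Real.zero_rpow (ne_of_gt hm0), sub_zero]
      field_simp
    simp_rw [hG] at layer
    rw [layer]
    have tailb : ∀ t ∈ Ioi (0:ℝ), ℙ {ω | t ≤ f ω} * ENNReal.ofReal (g t)
        ≤ ENNReal.ofReal (m * C * (t ^ (m-1) * Real.exp (-(a/4) * t^2))) := by
      intro t ht
      have ht0 : (0:ℝ) < t := ht
      have h1 : ℙ {ω | t ≤ f ω} ≤ ENNReal.ofReal (C * Real.exp (-(a/4) * t ^ 2)) := by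
        have hsub : {ω | t ≤ f ω} ⊆ {ω | t/2 + η ≤ X ω} := by
          intro ω hω
          simp only [Set.mem_setOf_eq, hf, hZ] at hω ⊢
          have hz : 0 < max (X ω - η) 0 := by linarith
          have hxη : η ≤ X ω := by
            by_contra hc
            push_neg at hc
            rw [max_eq_right (by linarith)] at hz
            exact lt_irrefl _ hz
          rw [max_eq_left (by linarith)] at hω
          linarith
        calc ℙ {ω | t ≤ f ω} ≤ ℙ {ω | t/2 + η ≤ X ω} := measure_mono hsub
          _ ≤ ENNReal.ofReal (C * Real.exp (-a * (t/2)^2)) := htail (t/2) (by linarith)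
          _ = ENNReal.ofReal (C * Real.exp (-(a/4) * t^2)) := by
              rw [show -a * (t/2)^2 = -(a/4)*t^2 by ring]
      calc ℙ {ω | t ≤ f ω} * ENNReal.ofReal (g t)
          ≤ ENNReal.ofReal (C * Real.exp (-(a/4) * t^2)) * ENNReal.ofReal (g t) :=
            mul_le_mul_left h1 _
        _ = ENNReal.ofReal (m * C * (t ^ (m-1) * Real.exp (-(a/4) * t^2))) := by
            rw [← ENNReal.ofReal_mul (by positivity)]
            congr 1
            rw [hg]; ring
    calc ∫⁻ t in Ioi (0:ℝ), ℙ {ω | t ≤ f ω} * ENNReal.ofReal (g t)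
        ≤ ∫⁻ t in Ioi (0:ℝ), ENNReal.ofReal (m * C * (t ^ (m-1) * Real.exp (-(a/4) * t^2))) :=
          lintegral_mono_ae (by
            filter_upwards [ae_restrict_mem measurableSet_Ioi] with t ht
            exact tailb t ht)
      _ = ENNReal.ofReal (∫ t in Ioi (0:ℝ), m * C * (t ^ (m-1) * Real.exp (-(a/4) * t^2))) := by
          rw [← ofReal_integral_eq_lintegral_ofReal]
          · exact ((integrableOn_rpow_mul_exp_neg_mul_sq (by positivity) (by linarith)).const_mul (m*C))
          · filter_upwards [ae_restrict_mem measurableSet_Ioi] with t ht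
            have : (0:ℝ) < t := ht
            positivity
      _ ≤ ENNReal.ofReal (C * (2*m/a) ^ (m/2)) := by
          apply ENNReal.ofReal_le_ofReal
          rw [MeasureTheory.integral_const_mul]
          have hval : ∫ t in Ioi (0:ℝ), t ^ (m-1) * Real.exp (-(a/4) * t^2)
              = (a/4) ^ (-m/2) * (1/2) * Real.Gamma (m/2) := by
            have h := integral_rpow_mul_exp_neg_mul_rpow (p := 2) (q := m-1) (b := a/4)
              two_pos (by linarith) (by positivity)
            rw [show m - 1 + 1 = m by ring] at h
            rw [← h]
            refine setIntegral_congr_fun measurableSet_Ioi fun t ht => ?_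
            norm_num [Real.rpow_natCast t 2]
          rw [hval]
          have h2 : Real.Gamma (m/2 + 1) ≤ (m/2) ^ (m/2) :=
            gamma_add_one_le_rpow_self (by linarith)
          have h3 : Real.Gamma (m/2 + 1) = (m/2) * Real.Gamma (m/2) :=
            Real.Gamma_add_one (by positivity)
          have h4 : (a/4) ^ (-m/2) * (m/2) ^ (m/2) = (2*m/a) ^ (m/2) := by
            rw [neg_div, Real.rpow_neg (by positivity), ← Real.inv_rpow (by positivity),
              ← Real.mul_rpow (by positivity) (by positivity)]
            congr 1
            field_simp
            ring
          calc m * C * ((a/4) ^ (-m/2) * (1/2) * Real.Gamma (m/2))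
              = C * ((a/4) ^ (-m/2) * Real.Gamma (m/2 + 1)) := by rw [h3]; ring
            _ ≤ C * ((a/4) ^ (-m/2) * (m/2) ^ (m/2)) := by
                apply mul_le_mul_of_nonneg_left _ hC
                exact mul_le_mul_of_nonneg_left h2 (by positivity)
            _ = C * (2*m/a) ^ (m/2) := by rw [h4]
  -- pointwise split
  have hpt : ∀ᵐ ω ∂ℙ, ENNReal.ofReal (X ω ^ m)
      ≤ ENNReal.ofReal ((2*η) ^ m) + ENNReal.ofReal (f ω ^ m) := by
    filter_upwards [h0] with ω hω
    rw [← ENNReal.ofReal_add (Real.rpow_nonneg (by linarith) m)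
      (Real.rpow_nonneg (hfnn ω) m)]
    apply ENNReal.ofReal_le_ofReal
    by_cases h : X ω ≤ 2*η
    · have h5 := Real.rpow_le_rpow hω h hm0.le
      have h6 := Real.rpow_nonneg (hfnn ω) m
      linarith
    · push_neg at h
      have h1 : X ω ≤ f ω := by
        simp only [hf, hZ]
        rw [max_eq_left (by linarith)]
        linarith
      have h5 := Real.rpow_le_rpow hω h1 hm0.le
      have h6 := Real.rpow_nonneg (show (0:ℝ) ≤ 2*η by linarith) m
      linarith
  calc ∫⁻ ω, ENNReal.ofReal (X ω ^ m) ∂ℙ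
      ≤ ∫⁻ ω, (ENNReal.ofReal ((2*η) ^ m) + ENNReal.ofReal (f ω ^ m)) ∂ℙ :=
        lintegral_mono_ae hpt
    _ = ENNReal.ofReal ((2*η) ^ m) + ∫⁻ ω, ENNReal.ofReal (f ω ^ m) ∂ℙ := by
        rw [lintegral_add_left measurable_const, lintegral_const, measure_univ, mul_one]
    _ ≤ ENNReal.ofReal ((2*η) ^ m) + ENNReal.ofReal (C * (2*m/a) ^ (m/2)) :=
        add_le_add_right key _
    _ = ENNReal.ofReal (C * (2 * m / a) ^ (m / 2) + (2 * η) ^ m) := by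
        rw [← ENNReal.ofReal_add (Real.rpow_nonneg (by linarith) m)
          (by positivity), add_comm]
end

section
/- Fix d ≥ 1, k ≥ 1, K ≥ 1, and let μ_H be the Haar probability measure on the unitary group U(d). A balanced monomial of degree j is a function M : U(d) → ℂ of the form M(U) = ∏_{t<j} U(p(t), q(t)) · ∏_{t<j} conj(U(r(t), s(t))) for index maps p, q, r, s : Fin j → Fin d. Let ν be a finitely supported probability distribution on U(d) (a finite family of unitaries U_i with weights summing to 1) that is an ε-approximate unitary k-design in the monomial sense: for every j ≤ k and every balanced monomial M of degree j, |𝔼_{U∼ν} M(U) − ∫ M dμ_H| ≤ ε/d^k. Let f : U(d) → ℝ be a real-valued function of the form f = Σ_{i∈I} α_i·M_i, a finite sum with complex coefficients α_i where each M_i is a balanced monomial of degree at most K, and set α = Σ_i |α_i|. Suppose there are constants C ≥ 0, a > 0 and μ ∈ ℝ with ℙ_{U∼μ_H}(|f(U) − μ| ≥ δ) ≤ C·exp(−a·δ²) for all δ > 0. Then for every integer m ≥ 1 with 2mK ≤ k and every δ > 0, ℙ_{U∼ν}(|f(U) − μ| ≥ δ) ≤ δ^{−2m} · ( C·(m/a)^m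 + (ε/d^k)·(α + |μ|)^{2m} ). -/
open Matrix MeasureTheory Set

open scoped Classical in
/-- A balanced monomial of degree `j` in the entries of a unitary:
`M(U) = ∏_{t<j} U(p t, q t) · ∏_{t<j} conj(U(r t, s t))`. -/
noncomputable def balancedMonomial (d j : ℕ) (p q r s : Fin j → Fin d)
    (U : Matrix.unitaryGroup (Fin d) ℂ) : ℂ :=
  (∏ t, (U : Matrix (Fin d) (Fin d) ℂ) (p t) (q t)) *
    ∏ t, (starRingEnd ℂ) ((U : Matrix (Fin d) (Fin d) ℂ) (r t) (s t))

open Set in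
lemma bm_continuous (d j : ℕ) (p q r s : Fin j → Fin d) :
    Continuous (balancedMonomial d j p q r s) := by
  unfold balancedMonomial
  apply Continuous.mul
  · exact continuous_finset_prod _ fun t _ =>
      (continuous_subtype_val.matrix_elem (p t) (q t))
  · exact continuous_finset_prod _ fun t _ =>
      Complex.continuous_conj.comp (continuous_subtype_val.matrix_elem (r t) (s t))

lemma bm_abs_le_one (d j : ℕ) (p q r s : Fin j → Fin d) (V : Matrix.unitaryGroup (Fin d) ℂ) :
    ‖balancedMonomial d j p q r s V‖ ≤ 1 := by
  unfold balancedMonomial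
  rw [norm_mul, norm_prod, norm_prod]
  have h1 : ∀ (i j' : Fin d), ‖(V : Matrix (Fin d) (Fin d) ℂ) i j'‖ ≤ 1 := by
    intro i j'
    exact entry_norm_bound_of_unitary V.2 i j'
  calc (∏ t, ‖(V : Matrix (Fin d) (Fin d) ℂ) (p t) (q t)‖) *
        ∏ t, ‖(starRingEnd ℂ) ((V : Matrix (Fin d) (Fin d) ℂ) (r t) (s t))‖ ≤ 1 * 1 := by
        apply mul_le_mul _ _ (Finset.prod_nonneg fun t _ => norm_nonneg _) zero_le_one
        · exact Finset.prod_le_one (fun t _ => norm_nonneg _) fun t _ => h1 _ _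
        · refine Finset.prod_le_one (fun t _ => norm_nonneg _) fun t _ => ?_
          rw [Complex.norm_conj]; exact h1 _ _
    _ = 1 := by norm_num

lemma bm_zero (d : ℕ) (p q r s : Fin 0 → Fin d) (V : Matrix.unitaryGroup (Fin d) ℂ) :
    balancedMonomial d 0 p q r s V = 1 := by simp [balancedMonomial]

lemma prod_bm_exists (d n : ℕ) (j : Fin n → ℕ) (p q r s : (t : Fin n) → Fin (j t) → Fin d) :
    ∃ P Q R S : Fin (∑ t, j t) → Fin d, ∀ V,
      ∏ t, balancedMonomial d (j t) (p t) (q t) (r t) (s t) V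
        = balancedMonomial d (∑ t, j t) P Q R S V := by
  classical
  have hcard : Fintype.card ((t : Fin n) × Fin (j t)) = ∑ t, j t := by
    simp [Fintype.card_sigma]
  let e : Fin (∑ t, j t) ≃ ((t : Fin n) × Fin (j t)) := (Fintype.equivFinOfCardEq hcard).symm
  refine ⟨fun x => p (e x).1 (e x).2, fun x => q (e x).1 (e x).2,
    fun x => r (e x).1 (e x).2, fun x => s (e x).1 (e x).2, fun V => ?_⟩
  have key : ∀ (F : ((t : Fin n) × Fin (j t)) → ℂ), ∏ t, F (e t) = ∏ x, ∏ y, F ⟨x, y⟩ := by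
    intro F
    rw [Equiv.prod_comp e F, ← Finset.univ_sigma_univ, Finset.prod_sigma]
  unfold balancedMonomial
  rw [Finset.prod_mul_distrib]
  congr 1
  · exact (key (fun y : (t : Fin n) × Fin (j t) =>
      (V : Matrix (Fin d) (Fin d) ℂ) (p y.1 y.2) (q y.1 y.2))).symm
  · exact (key (fun y : (t : Fin n) × Fin (j t) =>
      (starRingEnd ℂ) ((V : Matrix (Fin d) (Fin d) ℂ) (r y.1 y.2) (s y.1 y.2)))).symm

lemma moment_bound {Ω : Type} [MeasurableSpace Ω] (μH : Measure Ω) [IsProbabilityMeasure μH]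
    (g : Ω → ℝ) (hg : AEMeasurable g μH) (g_nn : 0 ≤ g)
    (C a : ℝ) (hC : 0 ≤ C) (ha : 0 < a)
    (hconc : ∀ t : ℝ, 0 < t → μH {V | t ≤ g V} ≤ ENNReal.ofReal (C * Real.exp (-a * t ^ 2)))
    (m : ℕ) (hm : 1 ≤ m) :
    ∫ V, g V ^ (2 * m) ∂μH ≤ C * ((m : ℝ) / a) ^ m := by
  set p : ℝ := ((2 * m : ℕ) : ℝ) with hp_def
  have hp : 0 < p := by
    rw [hp_def]
    exact_mod_cast (by omega : 0 < 2 * m)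
  have hp2 : (2 : ℝ) ≤ p := by
    rw [hp_def]
    exact_mod_cast (by omega : 2 ≤ 2 * m)
  -- the real integral as a lintegral
  have h0 : ∫ V, g V ^ (2 * m) ∂μH
      = (∫⁻ V, ENNReal.ofReal (g V ^ p) ∂μH).toReal := by
    rw [integral_eq_lintegral_of_nonneg_ae (ae_of_all _ fun V => pow_nonneg (g_nn V) _)
      ((hg.pow_const (2*m)).aestronglyMeasurable)]
    congr 1
    apply lintegral_congr fun V => ?_
    rw [hp_def, Real.rpow_natCast]
  -- layer cake
  have layer := lintegral_rpow_eq_lintegral_meas_lt_mul μH (ae_of_all _ g_nn) hg hp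
  -- the dominating function
  set h : ℝ → ℝ := fun t => C * (t ^ (p - 1) * Real.exp (-a * t ^ 2)) with hh_def
  have h_mble : Measurable fun t : ℝ => ENNReal.ofReal (h t) := by fun_prop
  have hs : (-1 : ℝ) < p - 1 := by linarith
  have hIOn : IntegrableOn h (Ioi (0:ℝ)) :=
    (integrableOn_rpow_mul_exp_neg_mul_sq ha hs).const_mul C
  have h_nn : 0 ≤ᵐ[volume.restrict (Ioi (0:ℝ))] h := by
    filter_upwards [self_mem_ae_restrict (measurableSet_Ioi : MeasurableSet (Ioi (0:ℝ)))]
      with t ht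
    exact mul_nonneg hC (mul_nonneg (Real.rpow_nonneg (le_of_lt ht) _) (Real.exp_pos _).le)
  have step : ∫⁻ t in Ioi (0:ℝ), μH {V | t < g V} * ENNReal.ofReal (t ^ (p - 1))
      ≤ ∫⁻ t in Ioi (0:ℝ), ENNReal.ofReal (h t) := by
    apply setLIntegral_mono h_mble
    intro t ht
    have h1 : μH {V | t < g V} ≤ ENNReal.ofReal (C * Real.exp (-a * t ^ 2)) :=
      le_trans (measure_mono (Set.setOf_subset_setOf.mpr fun V hV => le_of_lt hV)) (hconc t ht)
    calc μH {V | t < g V} * ENNReal.ofReal (t ^ (p - 1))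
        ≤ ENNReal.ofReal (C * Real.exp (-a * t ^ 2)) * ENNReal.ofReal (t ^ (p - 1)) :=
          mul_le_mul_left h1 _
      _ = ENNReal.ofReal (h t) := by
          rw [← ENNReal.ofReal_mul (mul_nonneg hC (Real.exp_pos _).le)]
          congr 1; rw [hh_def]; ring
  have eq2 : ∫⁻ t in Ioi (0:ℝ), ENNReal.ofReal (h t)
      = ENNReal.ofReal (∫ t in Ioi (0:ℝ), h t) :=
    (ofReal_integral_eq_lintegral_ofReal hIOn h_nn).symm
  -- compute the integral of h
  have val : ∫ t in Ioi (0:ℝ), h t = C * ((a ^ m)⁻¹ * (1 / 2) * (Nat.factorial (m - 1))) := by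
    rw [hh_def, integral_const_mul]
    congr 1
    have e1 : ∫ t in Ioi (0:ℝ), t ^ (p - 1) * Real.exp (-a * t ^ 2)
        = ∫ t in Ioi (0:ℝ), t ^ (p - 1) * Real.exp (-a * t ^ ((2:ℕ):ℝ)) := by
      refine setIntegral_congr_fun measurableSet_Ioi fun t ht => ?_
      rw [Real.rpow_natCast]
    rw [e1]
    rw [integral_rpow_mul_exp_neg_mul_rpow (by norm_num : (0:ℝ) < ((2:ℕ):ℝ)) hs ha]
    have e2 : (p - 1 + 1) / ((2:ℕ):ℝ) = (m : ℝ) := by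
      rw [hp_def]; push_cast; ring
    have e3 : -(p - 1 + 1) / ((2:ℕ):ℝ) = -(m : ℝ) := by
      rw [hp_def]; push_cast; ring
    rw [e2, e3]
    have e4 : a ^ (-(m:ℝ)) = (a ^ m)⁻¹ := by
      rw [Real.rpow_neg ha.le, Real.rpow_natCast]
    have e5 : Real.Gamma (m : ℝ) = (Nat.factorial (m - 1) : ℝ) := by
      have := Real.Gamma_nat_eq_factorial (m - 1)
      have hm' : ((m - 1 : ℕ) : ℝ) + 1 = (m : ℝ) := by
        have : m - 1 + 1 = m := Nat.succ_pred_eq_of_pos hm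
        exact_mod_cast congrArg (Nat.cast : ℕ → ℝ) this
      rwa [hm'] at this
    rw [e4, e5]
    push_cast
    ring
  have fin : ENNReal.ofReal p * ENNReal.ofReal (∫ t in Ioi (0:ℝ), h t) ≠ ⊤ :=
    ENNReal.mul_ne_top ENNReal.ofReal_ne_top ENNReal.ofReal_ne_top
  have main_le : (∫⁻ V, ENNReal.ofReal (g V ^ p) ∂μH)
      ≤ ENNReal.ofReal p * ENNReal.ofReal (∫ t in Ioi (0:ℝ), h t) := by
    rw [layer, ← eq2]
    exact mul_le_mul_right step _
  have int_nn : 0 ≤ ∫ t in Ioi (0:ℝ), h t := by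
    rw [val]
    positivity
  calc ∫ V, g V ^ (2 * m) ∂μH
      ≤ (ENNReal.ofReal p * ENNReal.ofReal (∫ t in Ioi (0:ℝ), h t)).toReal := by
        rw [h0]; exact ENNReal.toReal_mono fin main_le
    _ = p * ∫ t in Ioi (0:ℝ), h t := by
        rw [ENNReal.toReal_mul, ENNReal.toReal_ofReal hp.le, ENNReal.toReal_ofReal int_nn]
    _ = C * ((m : ℝ) * (Nat.factorial (m-1)) / a ^ m) := by
        rw [val, hp_def]; push_cast; ring
    _ = C * ((Nat.factorial m : ℝ) / a ^ m) := by
        congr 2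
        exact_mod_cast congrArg (Nat.cast : ℕ → ℝ) (Nat.mul_factorial_pred (by omega))
    _ ≤ C * ((m : ℝ) ^ m / a ^ m) := by
        gcongr
        exact_mod_cast Nat.factorial_le_pow m
    _ = C * ((m : ℝ) / a) ^ m := by rw [div_pow]



/-- Large deviation bounds for polynomials evaluated on an `ε`-approximate unitary
`k`-design: the Haar concentration bound transfers to the design, up to the stated
polynomial loss. -/
theorem design_concentration_polynomial (d k K : ℕ) (hd : 1 ≤ d) (hk : 1 ≤ k) (hK : 1 ≤ K)
    [MeasurableSpace (Matrix.unitaryGroup (Fin d) ℂ)]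
    [BorelSpace (Matrix.unitaryGroup (Fin d) ℂ)]
    (μH : Measure (Matrix.unitaryGroup (Fin d) ℂ))
    [μH.IsHaarMeasure] [IsProbabilityMeasure μH]
    (ε : ℝ)
    {ι : Type} [Fintype ι] (w : ι → ℝ) (U : ι → Matrix.unitaryGroup (Fin d) ℂ)
    (hw : ∀ i, 0 ≤ w i) (hw1 : ∑ i, w i = 1)
    -- ν is an ε-approximate unitary k-design in the monomial sense
    (hdesign : ∀ j : ℕ, j ≤ k → ∀ p q r s : Fin j → Fin d,
      ‖∑ i, (w i : ℂ) * balancedMonomial d j p q r s (U i)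
          - ∫ V, balancedMonomial d j p q r s V ∂μH‖ ≤ ε / d ^ k)
    -- f = ∑ᵢ αᵢ Mᵢ is a real-valued polynomial of degree at most K
    {I : Type} [Fintype I] (α : I → ℂ) (J : I → ℕ) (hJ : ∀ i, J i ≤ K)
    (p q r s : (i : I) → Fin (J i) → Fin d)
    (f : Matrix.unitaryGroup (Fin d) ℂ → ℝ)
    (hf : ∀ V, (f V : ℂ) =
      ∑ i, α i * balancedMonomial d (J i) (p i) (q i) (r i) (s i) V)
    -- Haar concentration
    (C a μ₀ : ℝ) (hC : 0 ≤ C) (ha : 0 < a)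
    (hconc : ∀ δ : ℝ, 0 < δ →
      μH {V | δ ≤ |f V - μ₀|} ≤ ENNReal.ofReal (C * Real.exp (-a * δ ^ 2)))
    (m : ℕ) (hm : 1 ≤ m) (hmk : 2 * m * K ≤ k)
    (δ : ℝ) (hδ : 0 < δ) :
    ∑ i ∈ Finset.univ.filter (fun i => δ ≤ |f (U i) - μ₀|), w i
      ≤ (C * ((m : ℝ) / a) ^ m
          + (ε / d ^ k) * ((∑ i, ‖α i‖) + |μ₀|) ^ (2 * m)) / δ ^ (2 * m) := by
  classical
  set B : ℝ := (∑ i, ‖α i‖) + |μ₀| with hB_def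
  have hε : 0 ≤ ε / d ^ k :=
    le_trans (norm_nonneg _)
      (hdesign 0 (Nat.zero_le k) Fin.elim0 Fin.elim0 Fin.elim0 Fin.elim0)
  -- extended family of monomials including the constant -μ₀
  set β : I ⊕ Unit → ℂ := Sum.elim α (fun _ => (-μ₀ : ℂ)) with hβ_def
  set J' : I ⊕ Unit → ℕ := Sum.elim J (fun _ => 0) with hJ'_def
  let p' : (i' : I ⊕ Unit) → Fin (J' i') → Fin d := fun i' =>
    match i' with | .inl i => p i | .inr _ => Fin.elim0
  let q' : (i' : I ⊕ Unit) → Fin (J' i') → Fin d := fun i' =>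
    match i' with | .inl i => q i | .inr _ => Fin.elim0
  let r' : (i' : I ⊕ Unit) → Fin (J' i') → Fin d := fun i' =>
    match i' with | .inl i => r i | .inr _ => Fin.elim0
  let s' : (i' : I ⊕ Unit) → Fin (J' i') → Fin d := fun i' =>
    match i' with | .inl i => s i | .inr _ => Fin.elim0
  set M : (i' : I ⊕ Unit) → Matrix.unitaryGroup (Fin d) ℂ → ℂ :=
    fun i' => balancedMonomial d (J' i') (p' i') (q' i') (r' i') (s' i') with hM_def
  have hJ'K : ∀ i', J' i' ≤ K := by
    rintro (i | _)
    · exact hJ i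
    · exact Nat.zero_le K
  have h1 : ∀ V, ((f V - μ₀ : ℝ) : ℂ) = ∑ i', β i' * M i' V := by
    intro V
    rw [Complex.ofReal_sub, hf V, Fintype.sum_sum_type]
    have e1 : ∑ x : Unit, β (Sum.inr x) * M (Sum.inr x) V = -(μ₀ : ℂ) := by
      have : M (Sum.inr ()) V = 1 := bm_zero d _ _ _ _ V
      simp [hβ_def, this]
    have e2 : ∑ x : I, β (Sum.inl x) * M (Sum.inl x) V
        = ∑ i, α i * balancedMonomial d (J i) (p i) (q i) (r i) (s i) V :=
      Finset.sum_congr rfl fun i _ => rfl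
    rw [e1, e2]
    ring
  -- combine products of monomials into single monomials
  choose P Q R S hPQRS using fun (c : Fin (2 * m) → I ⊕ Unit) =>
    prod_bm_exists d (2 * m) (fun t => J' (c t)) (fun t => p' (c t)) (fun t => q' (c t))
      (fun t => r' (c t)) (fun t => s' (c t))
  set N : (Fin (2 * m) → I ⊕ Unit) → Matrix.unitaryGroup (Fin d) ℂ → ℂ :=
    fun c => balancedMonomial d (∑ t, J' (c t)) (P c) (Q c) (R c) (S c) with hN_def
  have hNdeg : ∀ c : Fin (2 * m) → I ⊕ Unit, ∑ t, J' (c t) ≤ k := by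
    intro c
    calc ∑ t, J' (c t) ≤ ∑ _t : Fin (2 * m), K :=
          Finset.sum_le_sum fun t _ => hJ'K (c t)
      _ = 2 * m * K := by
          rw [Finset.sum_const, Finset.card_univ, Fintype.card_fin, smul_eq_mul]
      _ ≤ k := hmk
  have hdc : ∀ c : Fin (2 * m) → I ⊕ Unit,
      ‖∑ i, (w i : ℂ) * N c (U i) - ∫ V, N c V ∂μH‖ ≤ ε / d ^ k :=
    fun c => hdesign _ (hNdeg c) (P c) (Q c) (R c) (S c)
  -- expansion of the 2m-th power
  have h2 : ∀ V, ((f V - μ₀ : ℝ) : ℂ) ^ (2 * m)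
      = ∑ c : Fin (2 * m) → I ⊕ Unit, (∏ t, β (c t)) * N c V := by
    intro V
    rw [h1 V]
    have e0 : (∑ i', β i' * M i' V) ^ (2 * m)
        = ∏ _t : Fin (2 * m), ∑ i', β i' * M i' V := by
      rw [Finset.prod_const, Finset.card_univ, Fintype.card_fin]
    rw [e0, Finset.prod_univ_sum]
    rw [Fintype.piFinset_univ]
    refine Finset.sum_congr rfl fun c _ => ?_
    rw [Finset.prod_mul_distrib, hPQRS c V]
  -- integrability
  have hNint : ∀ c, Integrable (N c) μH := by
    intro c
    refine Integrable.mono' (integrable_const (1 : ℝ))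
      (bm_continuous d _ _ _ _ _).aestronglyMeasurable (ae_of_all _ fun V => ?_)
    simpa using bm_abs_le_one d _ (P c) (Q c) (R c) (S c) V
  -- real quantities
  set Eν : ℝ := ∑ i, w i * (f (U i) - μ₀) ^ (2 * m) with hEν_def
  set EH : ℝ := ∫ V, (f V - μ₀) ^ (2 * m) ∂μH with hEH_def
  -- complex versions
  have hEνC : ((Eν : ℝ) : ℂ) = ∑ c : Fin (2 * m) → I ⊕ Unit,
      (∏ t, β (c t)) * ∑ i, (w i : ℂ) * N c (U i) := by
    rw [hEν_def]
    push_cast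
    calc ∑ i, (w i : ℂ) * ((f (U i) : ℂ) - (μ₀ : ℂ)) ^ (2 * m)
        = ∑ i, ∑ c : Fin (2 * m) → I ⊕ Unit, (w i : ℂ) * ((∏ t, β (c t)) * N c (U i)) := by
          refine Finset.sum_congr rfl fun i _ => ?_
          rw [show ((f (U i) : ℂ) - (μ₀ : ℂ)) = ((f (U i) - μ₀ : ℝ) : ℂ) by push_cast; ring,
            h2 (U i), Finset.mul_sum]
      _ = ∑ c : Fin (2 * m) → I ⊕ Unit, ∑ i, (w i : ℂ) * ((∏ t, β (c t)) * N c (U i)) :=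
          Finset.sum_comm
      _ = ∑ c : Fin (2 * m) → I ⊕ Unit, (∏ t, β (c t)) * ∑ i, (w i : ℂ) * N c (U i) := by
          refine Finset.sum_congr rfl fun c _ => ?_
          rw [Finset.mul_sum]
          exact Finset.sum_congr rfl fun i _ => by ring
  have hEHC : ((EH : ℝ) : ℂ) = ∑ c : Fin (2 * m) → I ⊕ Unit,
      (∏ t, β (c t)) * ∫ V, N c V ∂μH := by
    have e1 : ∀ V, (((f V - μ₀) ^ (2 * m) : ℝ) : ℂ)
        = ∑ c : Fin (2 * m) → I ⊕ Unit, (∏ t, β (c t)) * N c V := by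
      intro V
      rw [Complex.ofReal_pow, h2 V]
    calc ((EH : ℝ) : ℂ)
        = ∫ V, (((f V - μ₀) ^ (2 * m) : ℝ) : ℂ) ∂μH := by
          rw [hEH_def]; exact integral_ofReal.symm
      _ = ∫ V, (∑ c : Fin (2 * m) → I ⊕ Unit, (∏ t, β (c t)) * N c V) ∂μH :=
          integral_congr_ae (ae_of_all _ e1)
      _ = ∑ c : Fin (2 * m) → I ⊕ Unit, ∫ V, (∏ t, β (c t)) * N c V ∂μH :=
          integral_finset_sum _ (fun c _ => (hNint c).const_mul _)
      _ = ∑ c : Fin (2 * m) → I ⊕ Unit, (∏ t, β (c t)) * ∫ V, N c V ∂μH :=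
          Finset.sum_congr rfl fun c _ => integral_const_mul _ _
  -- design comparison
  have hβsum : ∑ i', ‖β i'‖ = B := by
    have h_inr : ∑ x : Unit, ‖β (Sum.inr x)‖ = |μ₀| := by
      simp [hβ_def]
    have h_inl : ∑ x : I, ‖β (Sum.inl x)‖ = ∑ i, ‖α i‖ :=
      Finset.sum_congr rfl fun i _ => rfl
    rw [Fintype.sum_sum_type, h_inr, h_inl, hB_def]
  have hprodsum : ∑ c : Fin (2 * m) → I ⊕ Unit, ∏ t, ‖β (c t)‖
      = B ^ (2 * m) := by
    rw [← hβsum]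
    rw [show (∑ i', ‖β i'‖) ^ (2 * m)
      = ∏ _t : Fin (2 * m), ∑ i', ‖β i'‖ by
        rw [Finset.prod_const, Finset.card_univ, Fintype.card_fin]]
    rw [Finset.prod_univ_sum, Fintype.piFinset_univ]
  have hcomp : |Eν - EH| ≤ (ε / d ^ k) * B ^ (2 * m) := by
    have key : ‖((Eν : ℝ) : ℂ) - ((EH : ℝ) : ℂ)‖ ≤ (ε / d ^ k) * B ^ (2 * m) := by
      rw [hEνC, hEHC, ← Finset.sum_sub_distrib]
      calc ‖∑ c : Fin (2 * m) → I ⊕ Unit,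
            ((∏ t, β (c t)) * ∑ i, (w i : ℂ) * N c (U i)
              - (∏ t, β (c t)) * ∫ V, N c V ∂μH)‖
          ≤ ∑ c : Fin (2 * m) → I ⊕ Unit, ‖
            (∏ t, β (c t)) * ∑ i, (w i : ℂ) * N c (U i)
              - (∏ t, β (c t)) * ∫ V, N c V ∂μH‖ :=
            norm_sum_le _ _
        _ ≤ ∑ c : Fin (2 * m) → I ⊕ Unit, (∏ t, ‖β (c t)‖) * (ε / d ^ k) := by
            refine Finset.sum_le_sum fun c _ => ?_
            rw [← mul_sub, norm_mul, norm_prod]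
            exact mul_le_mul_of_nonneg_left (hdc c)
              (Finset.prod_nonneg fun t _ => norm_nonneg _)
        _ = (ε / d ^ k) * B ^ (2 * m) := by
            rw [← Finset.sum_mul, hprodsum, mul_comm]
    rwa [← Complex.ofReal_sub, Complex.norm_real, Real.norm_eq_abs] at key
  -- bound on Eν via EH
  have hEν_le : Eν ≤ EH + (ε / d ^ k) * B ^ (2 * m) := by
    have := le_of_abs_le hcomp
    linarith [abs_sub_abs_le_abs_sub Eν EH, neg_abs_le (Eν - EH), le_abs_self (Eν - EH)]
  -- Haar moment bound
  have hfc : Continuous f := by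
    have : f = fun V => (∑ i, α i * balancedMonomial d (J i) (p i) (q i) (r i) (s i) V).re := by
      funext V
      rw [← hf V, Complex.ofReal_re]
    rw [this]
    exact Complex.continuous_re.comp
      (continuous_finset_sum _ fun i _ => continuous_const.mul (bm_continuous d _ _ _ _ _))
  have hEH_eq : EH = ∫ V, |f V - μ₀| ^ (2 * m) ∂μH := by
    rw [hEH_def]
    refine integral_congr_ae (ae_of_all _ fun V => ?_)
    exact (Even.pow_abs (even_two_mul m) _).symm
  have hEH_le : EH ≤ C * ((m : ℝ) / a) ^ m := by
    rw [hEH_eq]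
    exact moment_bound μH (fun V => |f V - μ₀|)
      ((hfc.sub continuous_const).abs.measurable.aemeasurable)
      (fun V => abs_nonneg _) C a hC ha hconc m hm
  -- Markov
  have markov : (∑ i ∈ Finset.univ.filter (fun i => δ ≤ |f (U i) - μ₀|), w i) * δ ^ (2 * m)
      ≤ Eν := by
    rw [Finset.sum_mul]
    calc ∑ i ∈ Finset.univ.filter (fun i => δ ≤ |f (U i) - μ₀|), w i * δ ^ (2 * m)
        ≤ ∑ i ∈ Finset.univ.filter (fun i => δ ≤ |f (U i) - μ₀|),
            w i * (f (U i) - μ₀) ^ (2 * m) := by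
          refine Finset.sum_le_sum fun i hi => ?_
          rw [Finset.mem_filter] at hi
          refine mul_le_mul_of_nonneg_left ?_ (hw i)
          calc δ ^ (2 * m) ≤ |f (U i) - μ₀| ^ (2 * m) :=
                pow_le_pow_left₀ hδ.le hi.2 _
            _ = (f (U i) - μ₀) ^ (2 * m) := Even.pow_abs (even_two_mul m) _
      _ ≤ Eν := by
          rw [hEν_def]
          refine Finset.sum_le_sum_of_subset_of_nonneg (Finset.filter_subset _ _)
            fun i _ _ => ?_
          exact mul_nonneg (hw i) (Even.pow_nonneg (even_two_mul m) _)
  -- conclude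
  rw [le_div_iff₀ (by positivity : (0:ℝ) < δ ^ (2 * m))]
  calc (∑ i ∈ Finset.univ.filter (fun i => δ ≤ |f (U i) - μ₀|), w i) * δ ^ (2 * m)
      ≤ Eν := markov
    _ ≤ EH + (ε / d ^ k) * B ^ (2 * m) := hEν_le
    _ ≤ C * ((m : ℝ) / a) ^ m + (ε / d ^ k) * B ^ (2 * m) := by linarith
end
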